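/- arXiv:math/9511221 — 3 statements merged into one kernel-verified Lean document; each statement's English description precedes it below -/
import Mathlib

section
/- Let f : I → I be continuous on a compact interval, let p < s be points with f^2(p) = p, f^2(x) > x for all x ∈ (q, s) where q is the largest fixed point of f^2 in [p, s], and f^2(s) > s. Then s belongs to the unstable manifold W^u(q, f^2) of q for f^2, and by connectedness the whole interval [q, s] is contained in W^u(q, f^2). -/
/-- The unstable manifold of a fixed point `p` of `g` relative to the interval `I`. -/
def unstableManifold (g : ℝ → ℝ) (I : Set ℝ) (p : ℝ) : Set ℝ :=
  {x ∈ I | ∀ V : Set ℝ, IsOpen V → p ∈ V → ∃ n : ℕ, 1 ≤ n ∧ x ∈ g^[n] '' (V ∩ I)}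

theorem interval_in_unstable_manifold_of_largest_fixed_point
    (A B : ℝ) (f : ℝ → ℝ)
    (hf : ContinuousOn f (Set.Icc A B))
    (hmap : Set.MapsTo f (Set.Icc A B) (Set.Icc A B))
    (p s : ℝ) (hps : p < s) (hpI : p ∈ Set.Icc A B) (hsI : s ∈ Set.Icc A B)
    (hp : f^[2] p = p)
    (q : ℝ) (hq : q ∈ Set.Icc p s) (hfq : f^[2] q = q)
    (hqmax : ∀ x ∈ Set.Icc p s, f^[2] x = x → x ≤ q)
    (hgap : ∀ x ∈ Set.Ioo q s, x < f^[2] x)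
    (hs : s < f^[2] s) :
    s ∈ unstableManifold (f^[2]) (Set.Icc A B) q ∧
    Set.Icc q s ⊆ unstableManifold (f^[2]) (Set.Icc A B) q := by
  set g := f^[2] with hgdef
  have hzI : Set.Icc p s ⊆ Set.Icc A B := Set.Icc_subset_Icc hpI.1 hsI.2
  have hqI : q ∈ Set.Icc A B := hzI hq
  have hgeq : g = f ∘ f := by
    funext x
    simp [hgdef, Function.iterate_succ_apply']
  have hg : ContinuousOn g (Set.Icc A B) := by
    rw [hgeq]; exact hf.comp hf hmap
  have hgmap : Set.MapsTo g (Set.Icc A B) (Set.Icc A B) := by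
    rw [hgeq]; exact hmap.comp hmap
  have hgn : ∀ n, ContinuousOn (g^[n]) (Set.Icc A B) ∧
      Set.MapsTo (g^[n]) (Set.Icc A B) (Set.Icc A B) := by
    intro n
    induction n with
    | zero => simpa using ⟨continuousOn_id, Set.mapsTo_id _⟩
    | succ n ih =>
      rw [Function.iterate_succ']
      exact ⟨hg.comp ih.1 ih.2, hgmap.comp ih.2⟩
  have hqs : q < s := by
    rcases lt_or_eq_of_le hq.2 with h | h
    · exact h
    · exfalso; rw [h] at hfq; rw [hfq] at hs; exact lt_irrefl s hs
  have hqfix : ∀ n, g^[n] q = q := fun n => Function.iterate_fixed hfq n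
  -- Key lemma: every point of (q,s) has some iterate ≥ s
  have key : ∀ t, t ∈ Set.Ioo q s → ∃ n, 1 ≤ n ∧ s ≤ g^[n] t := by
    intro t ht
    by_contra h
    push_neg at h
    have hlt : ∀ n, g^[n] t < s := by
      intro n
      cases n with
      | zero => simpa using ht.2
      | succ n => exact h (n + 1) (Nat.succ_le_succ (Nat.zero_le n))
    have horb : ∀ n, g^[n] t ∈ Set.Ioo q s := by
      intro n
      induction n with
      | zero => simpa using ht
      | succ n ih =>
        refine ⟨?_, hlt (n + 1)⟩
        rw [Function.iterate_succ_apply']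
        exact lt_trans ih.1 (hgap _ ih)
    have hmono : StrictMono (fun n => g^[n] t) := by
      apply strictMono_nat_of_lt_succ
      intro n
      simp only [Function.iterate_succ_apply']
      exact hgap _ (horb n)
    have hbdd : BddAbove (Set.range fun n => g^[n] t) := by
      refine ⟨s, ?_⟩
      rintro x ⟨n, rfl⟩
      exact (hlt n).le
    set L := ⨆ n, g^[n] t with hLdef
    have htend : Filter.Tendsto (fun n => g^[n] t) Filter.atTop (nhds L) :=
      tendsto_atTop_ciSup hmono.monotone hbdd
    have hL1 : t ≤ L := by
      have := le_ciSup hbdd 0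
      simpa using this
    have hL2 : L ≤ s := ciSup_le fun n => (hlt n).le
    have hLI : L ∈ Set.Icc A B := by
      constructor
      · have : A ≤ t := (hzI ⟨le_trans hq.1 ht.1.le, ht.2.le⟩).1
        linarith
      · linarith [hsI.2]
    have horbI : ∀ n, g^[n] t ∈ Set.Icc A B := fun n =>
      hzI ⟨le_trans hq.1 (horb n).1.le, (horb n).2.le⟩
    have hgL : g L = L := by
      have h1 : Filter.Tendsto (fun n => g^[n + 1] t) Filter.atTop (nhds L) :=
        htend.comp (Filter.tendsto_add_atTop_nat 1)
      have h2 : Filter.Tendsto (fun n => g (g^[n] t)) Filter.atTop (nhds (g L)) := by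
        have hc : ContinuousWithinAt g (Set.Icc A B) L := hg L hLI
        apply hc.tendsto.comp
        apply tendsto_nhdsWithin_of_tendsto_nhds_of_eventually_within _ htend
        exact Filter.Eventually.of_forall horbI
      simp only [Function.iterate_succ_apply'] at h1
      exact tendsto_nhds_unique h2 h1
    have hLq : L ≤ q := hqmax L ⟨le_trans hq.1 (le_trans ht.1.le hL1), hL2⟩ hgL
    exact absurd (lt_of_lt_of_le ht.1 hL1) (not_lt.mpr hLq)
  -- Main argument
  have hsub : Set.Icc q s ⊆ unstableManifold g (Set.Icc A B) q := by
    intro x hx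
    refine ⟨hzI ⟨le_trans hq.1 hx.1, hx.2⟩, ?_⟩
    intro V hV hqV
    obtain ⟨ε, hε, hball⟩ := Metric.isOpen_iff.1 hV q hqV
    set t := min (q + ε / 2) ((q + s) / 2) with htdef
    have htq : q < t := lt_min (by linarith) (by linarith)
    have hts : t < s := lt_of_le_of_lt (min_le_right _ _) (by linarith)
    have htV : Set.Icc q t ⊆ V ∩ Set.Icc A B := by
      intro y hy
      constructor
      · apply hball
        rw [Metric.mem_ball, Real.dist_eq, abs_lt]
        have hy2 : y ≤ q + ε / 2 := le_trans hy.2 (min_le_left _ _)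
        constructor <;> linarith [hy.1]
      · exact hzI ⟨le_trans hq.1 hy.1, le_trans hy.2 hts.le⟩
    obtain ⟨n, hn1, hns⟩ := key t ⟨htq, hts⟩
    refine ⟨n, hn1, ?_⟩
    have hIccsub : Set.Icc q t ⊆ Set.Icc A B := fun y hy =>
      hzI ⟨le_trans hq.1 hy.1, le_trans hy.2 hts.le⟩
    have hconn : IsPreconnected (g^[n] '' Set.Icc q t) :=
      isPreconnected_Icc.image _ ((hgn n).1.mono hIccsub)
    have hqmem : q ∈ g^[n] '' Set.Icc q t := ⟨q, ⟨le_refl q, htq.le⟩, hqfix n⟩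
    have htmem : g^[n] t ∈ g^[n] '' Set.Icc q t := ⟨t, ⟨htq.le, le_refl t⟩, rfl⟩
    have hIcc : Set.Icc q (g^[n] t) ⊆ g^[n] '' Set.Icc q t :=
      hconn.Icc_subset hqmem htmem
    have hx' : x ∈ Set.Icc q (g^[n] t) := ⟨hx.1, le_trans hx.2 hns⟩
    exact Set.image_mono htV (hIcc hx')
  exact ⟨hsub ⟨hqs.le, le_refl s⟩, hsub⟩
end

section
/- Let f : I → I be continuous on a compact interval and suppose f has a homoclinic point: there is a periodic point p of period n and a point x ≠ p with x ∈ W^u(p, f^n) and f^{mn}(x) = p for some m ≥ 1. Then f has positive topological entropy. -/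
open Filter ENNReal

/-- The maximal cardinality of an `(n, ε)`-separated subset of `I` for `f`. -/
noncomputable def sepCard (f : ℝ → ℝ) (I : Set ℝ) (n : ℕ) (ε : ℝ) : ℝ≥0∞ :=
  sSup {c : ℝ≥0∞ | ∃ S : Finset ℝ, ↑S ⊆ I ∧ c = S.card ∧
    ∀ x ∈ S, ∀ y ∈ S, x ≠ y → ∃ m < n, ε < |f^[m] x - f^[m] y|}

/-- Topological entropy of `f` on `I` via `(n,ε)`-separated sets.  Since
`ε ↦ limsup_n (1/n) log H(f,n,ε)` is monotone as `ε` decreases, the limit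
as `ε → 0` equals the supremum over `ε > 0`. -/
noncomputable def topEntropy (f : ℝ → ℝ) (I : Set ℝ) : EReal :=
  ⨆ (ε : ℝ) (_ : 0 < ε),
    Filter.limsup (fun n : ℕ => ENNReal.log (sepCard f I n ε) / (n : EReal)) atTop

lemma hs_contOn_iterate {f : ℝ → ℝ} {I : Set ℝ} (hf : ContinuousOn f I)
    (hmap : Set.MapsTo f I I) : ∀ k, ContinuousOn (f^[k]) I := by
  intro k
  induction k with
  | zero => simpa using continuousOn_id
  | succ k ih =>
      rw [Function.iterate_succ]
      exact ih.comp hf hmap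

lemma hs_image_Icc_subset {F : ℝ → ℝ} {u v a b : ℝ} (hF : ContinuousOn F (Set.Icc u v))
    (ha : a ∈ F '' Set.Icc u v) (hb : b ∈ F '' Set.Icc u v) :
    Set.Icc a b ⊆ F '' Set.Icc u v :=
  (isPreconnected_Icc.image F hF).Icc_subset ha hb

lemma hs_exact_preimage_aux {F : ℝ → ℝ} {u v L R α β : ℝ}
    (hF : ContinuousOn F (Set.Icc u v)) (hLR : L ≤ R)
    (hαβ : α ≤ β) (hα : α ∈ Set.Icc u v) (hβ : β ∈ Set.Icc u v)
    (hFα : F α = L) (hFβ : F β = R) :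
    ∃ u' v', u' ≤ v' ∧ Set.Icc u' v' ⊆ Set.Icc u v ∧ F '' Set.Icc u' v' = Set.Icc L R := by
  have hsubI : Set.Icc α β ⊆ Set.Icc u v := Set.Icc_subset_Icc hα.1 hβ.2
  set S : Set ℝ := {t | t ∈ Set.Icc α β ∧ F t = L} with hS
  have hSne : S.Nonempty := ⟨α, ⟨Set.left_mem_Icc.2 hαβ, hFα⟩⟩
  have hSbdd : BddAbove S := ⟨β, fun t ht => ht.1.2⟩
  set a' := sSup S with ha'
  have ha'mem : a' ∈ Set.Icc α β := by
    constructor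
    · exact le_csSup hSbdd ⟨Set.left_mem_Icc.2 hαβ, hFα⟩
    · exact csSup_le hSne (fun t ht => ht.1.2)
  have hFa' : F a' = L := by
    have hcl : a' ∈ closure S := csSup_mem_closure hSne hSbdd
    have hcw : ContinuousWithinAt F S a' :=
      (hF.continuousWithinAt (hsubI ha'mem)).mono (fun t ht => hsubI ht.1)
    have := hcw.mem_closure_image hcl
    have himg : F '' S ⊆ {L} := by rintro - ⟨t, ht, rfl⟩; exact ht.2
    have : F a' ∈ closure ({L} : Set ℝ) := closure_mono himg this
    simpa using this
  set S2 : Set ℝ := {t | t ∈ Set.Icc a' β ∧ F t = R} with hS2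
  have hS2ne : S2.Nonempty := ⟨β, ⟨Set.right_mem_Icc.2 ha'mem.2, hFβ⟩⟩
  have hS2bdd : BddBelow S2 := ⟨a', fun t ht => ht.1.1⟩
  set b' := sInf S2 with hb'
  have hb'mem : b' ∈ Set.Icc a' β := by
    constructor
    · exact le_csInf hS2ne (fun t ht => ht.1.1)
    · exact csInf_le hS2bdd ⟨Set.right_mem_Icc.2 ha'mem.2, hFβ⟩
  have hFb' : F b' = R := by
    have hcl : b' ∈ closure S2 := csInf_mem_closure hS2ne hS2bdd
    have hsub2 : S2 ⊆ Set.Icc u v := fun t ht =>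
      hsubI ⟨le_trans ha'mem.1 ht.1.1, ht.1.2⟩
    have hcw : ContinuousWithinAt F S2 b' :=
      (hF.continuousWithinAt (hsubI ⟨le_trans ha'mem.1 hb'mem.1, hb'mem.2⟩)).mono hsub2
    have := hcw.mem_closure_image hcl
    have himg : F '' S2 ⊆ {R} := by rintro - ⟨t, ht, rfl⟩; exact ht.2
    have : F b' ∈ closure ({R} : Set ℝ) := closure_mono himg this
    simpa using this
  have hab : a' ≤ b' := hb'mem.1
  have hIccsub : Set.Icc a' b' ⊆ Set.Icc u v := fun t ht =>
    hsubI ⟨le_trans ha'mem.1 ht.1, le_trans ht.2 hb'mem.2⟩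
  refine ⟨a', b', hab, hIccsub, ?_⟩
  apply Set.Subset.antisymm
  · -- image ⊆ Icc L R
    rintro - ⟨t, ht, rfl⟩
    have htuv : Set.Icc a' b' ⊆ Set.Icc u v := hIccsub
    constructor
    · by_contra h
      push_neg at h
      have htb' : t ≠ b' := by intro he; rw [he, hFb'] at h; exact absurd hLR (not_le.2 h)
      have hta' : t ≠ a' := by intro he; rw [he, hFa'] at h; exact absurd le_rfl (not_le.2 h)
      have htlt : t < b' := lt_of_le_of_ne ht.2 htb'
      have hcont : ContinuousOn F (Set.Icc t b') :=
        hF.mono (fun z hz => hIccsub ⟨le_trans ht.1 hz.1, hz.2⟩)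
      have : L ∈ Set.Icc (F t) (F b') := ⟨h.le, by rw [hFb']; exact hLR⟩
      obtain ⟨τ, hτ, hFτ⟩ := intermediate_value_Icc htlt.le hcont this
      have hτS : τ ∈ S := ⟨⟨le_trans ha'mem.1 (le_trans ht.1 hτ.1), le_trans hτ.2 hb'mem.2⟩, hFτ⟩
      have : τ ≤ a' := le_csSup hSbdd hτS
      have : t ≤ a' := le_trans hτ.1 this
      exact hta' (le_antisymm this ht.1)
    · by_contra h
      push_neg at h
      have hta' : t ≠ a' := by intro he; rw [he, hFa'] at h; exact absurd hLR (not_le.2 h)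
      have htb' : t ≠ b' := by intro he; rw [he, hFb'] at h; exact absurd le_rfl (not_le.2 h)
      have htgt : a' < t := lt_of_le_of_ne ht.1 (Ne.symm hta')
      have hcont : ContinuousOn F (Set.Icc a' t) :=
        hF.mono (fun z hz => hIccsub ⟨hz.1, le_trans hz.2 ht.2⟩)
      have : R ∈ Set.Icc (F a') (F t) := ⟨by rw [hFa']; exact hLR, h.le⟩
      obtain ⟨τ, hτ, hFτ⟩ := intermediate_value_Icc htgt.le hcont this
      have hτS2 : τ ∈ S2 := ⟨⟨hτ.1, le_trans (le_trans hτ.2 ht.2) hb'mem.2⟩, hFτ⟩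
      have hbτ : b' ≤ τ := csInf_le hS2bdd hτS2
      have : b' ≤ t := le_trans hbτ hτ.2
      exact htb' (le_antisymm ht.2 this)
  · -- Icc L R ⊆ image
    have hcont : ContinuousOn F (Set.Icc a' b') := hF.mono hIccsub
    exact hs_image_Icc_subset hcont ⟨a', Set.left_mem_Icc.2 hab, hFa'⟩
      ⟨b', Set.right_mem_Icc.2 hab, hFb'⟩

lemma hs_exact_preimage {F : ℝ → ℝ} {u v L R : ℝ} (huv : u ≤ v)
    (hF : ContinuousOn F (Set.Icc u v)) (hLR : L ≤ R)
    (hsub : Set.Icc L R ⊆ F '' Set.Icc u v) :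
    ∃ u' v', u' ≤ v' ∧ Set.Icc u' v' ⊆ Set.Icc u v ∧ F '' Set.Icc u' v' = Set.Icc L R := by
  obtain ⟨α, hα, hFα⟩ := hsub (Set.left_mem_Icc.2 hLR)
  obtain ⟨β, hβ, hFβ⟩ := hsub (Set.right_mem_Icc.2 hLR)
  rcases le_total α β with hαβ | hβα
  · exact hs_exact_preimage_aux hF hLR hαβ hα hβ hFα hFβ
  · -- reflect through -t
    set G : ℝ → ℝ := fun t => F (-t) with hG
    have hGcont : ContinuousOn G (Set.Icc (-v) (-u)) := by
      apply hF.comp (continuous_neg.continuousOn)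
      intro t ht
      simp only [Set.mem_Icc] at ht ⊢
      constructor <;> [linarith [ht.2]; linarith [ht.1]]
    have hmem1 : -α ∈ Set.Icc (-v) (-u) := ⟨by linarith [hα.2], by linarith [hα.1]⟩
    have hmem2 : -β ∈ Set.Icc (-v) (-u) := ⟨by linarith [hβ.2], by linarith [hβ.1]⟩
    have hGα : G (-α) = L := by simp [hG, hFα]
    have hGβ : G (-β) = R := by simp [hG, hFβ]
    obtain ⟨u₀, v₀, huv₀, hsub₀, himg₀⟩ :=
      hs_exact_preimage_aux hGcont hLR (by linarith : -α ≤ -β) hmem1 hmem2 hGα hGβ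
    refine ⟨-v₀, -u₀, by linarith, ?_, ?_⟩
    · intro t ht
      have h1 : -t ∈ Set.Icc u₀ v₀ := ⟨by linarith [ht.2], by linarith [ht.1]⟩
      have h2 := hsub₀ h1
      exact ⟨by linarith [h2.2], by linarith [h2.1]⟩
    · apply Set.Subset.antisymm
      · rintro - ⟨t, ht, rfl⟩
        have h1 : -t ∈ Set.Icc u₀ v₀ := ⟨by linarith [ht.2], by linarith [ht.1]⟩
        have : G (-t) ∈ G '' Set.Icc u₀ v₀ := ⟨-t, h1, rfl⟩
        rw [himg₀] at this
        simpa [hG] using this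
      · intro z hz
        rw [← himg₀] at hz
        obtain ⟨τ, hτ, hGτ⟩ := hz
        exact ⟨-τ, ⟨by linarith [hτ.2], by linarith [hτ.1]⟩, by simpa [hG] using hGτ⟩

section Part2
variable {g : ℝ → ℝ} {A B p x : ℝ}

lemma hs_last_left
    (hmap : Set.MapsTo g (Set.Icc A B) (Set.Icc A B))
    (hB1 : ∀ v ∈ Set.Icc A B, p ≤ v → v < x → ∀ j, 1 ≤ j → g^[j] v < x)
    {y : ℝ} (hy : y ∈ Set.Icc A B) (hyp : y < p) (hpx : p < x)
    {k : ℕ} (hk : 1 ≤ k) (hgk : g^[k] y = x) :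
    ∃ j, j < k ∧ g^[j] y < p ∧ x ≤ g (g^[j] y) := by
  classical
  set P : ℕ → Prop := fun t => t < k ∧ g^[t] y < p with hP
  have hP0 : P 0 := ⟨hk, by simpa using hyp⟩
  set j1 := Nat.findGreatest P k with hj1
  have hspec : P j1 := Nat.findGreatest_spec (Nat.zero_le k) hP0
  -- downward induction: all times in (j1, k] have iterate ≥ x
  have key : ∀ i t, t + i = k → j1 < t → x ≤ g^[t] y := by
    intro i
    induction i with
    | zero =>
        intro t ht _
        have : t = k := by omega
        rw [this, hgk]
    | succ i ih =>
        intro t ht hj1t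
        have h1 : x ≤ g^[t + 1] y := ih (t + 1) (by omega) (by omega)
        have htk : t < k := by omega
        have hnp : ¬ P t := Nat.findGreatest_is_greatest hj1t (by omega)
        have hge : p ≤ g^[t] y := by
          by_contra h
          exact hnp ⟨htk, not_le.mp h⟩
        by_contra hlt
        push_neg at hlt
        have hvI : g^[t] y ∈ Set.Icc A B := hmap.iterate t hy
        have h2 := hB1 _ hvI hge hlt 1 le_rfl
        rw [Function.iterate_one] at h2
        rw [Function.iterate_succ_apply'] at h1
        exact absurd h1 (not_le.2 h2)
  have hj1k : j1 < k := hspec.1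
  refine ⟨j1, hj1k, hspec.2, ?_⟩
  have := key (k - (j1 + 1)) (j1 + 1) (by omega) (by omega)
  rwa [Function.iterate_succ_apply'] at this

lemma hs_iterate_fix (hgp : g p = p) : ∀ j, g^[j] p = p :=
  fun j => Function.iterate_fixed hgp j

lemma hs_x_to_p (hgp : g p = p) (hgx : g x = p) : ∀ j, 1 ≤ j → g^[j] x = p := by
  intro j hj
  obtain ⟨i, rfl⟩ : ∃ i, j = i + 1 := ⟨j - 1, by omega⟩
  rw [Function.iterate_succ_apply, hgx, hs_iterate_fix hgp]

end Part2

lemma hs_horseshoe_right {g : ℝ → ℝ} {A B p x : ℝ}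
    (hg : ContinuousOn g (Set.Icc A B)) (hmap : Set.MapsTo g (Set.Icc A B) (Set.Icc A B))
    (hpI : p ∈ Set.Icc A B) (hgp : g p = p) (hxI : x ∈ Set.Icc A B)
    (hpx : p < x) (hgx : g x = p)
    (hunst : ∀ δ : ℝ, 0 < δ → ∃ k, 1 ≤ k ∧ ∃ y ∈ Set.Icc A B, |y - p| < δ ∧ g^[k] y = x) :
    ∃ N, 1 ≤ N ∧ ∃ l1 r1 l2 r2, l1 ≤ r1 ∧ r1 < l2 ∧ l2 ≤ r2 ∧
      Set.Icc l1 r2 ⊆ Set.Icc A B ∧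
      Set.Icc l1 r1 ∪ Set.Icc l2 r2 ⊆ g^[N] '' Set.Icc l1 r1 ∧
      Set.Icc l1 r1 ∪ Set.Icc l2 r2 ⊆ g^[N] '' Set.Icc l2 r2 := by
  by_cases hcase : ∃ y₀ ∈ Set.Ico p x, ∃ k, 1 ≤ k ∧ g^[k] y₀ = x
  · -- CASE A : a preimage of x on the right of p
    obtain ⟨y, hy, k, hk, hgky⟩ := hcase
    have hyI : y ∈ Set.Icc A B := ⟨le_trans hpI.1 hy.1, le_trans hy.2.le hxI.2⟩
    have hypos : p < y := by
      rcases eq_or_lt_of_le hy.1 with h | h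
      · exfalso
        rw [← h, hs_iterate_fix hgp] at hgky
        exact hpx.ne hgky
      · exact h
    have hsubpy : Set.Icc p y ⊆ Set.Icc A B := Set.Icc_subset_Icc hpI.1 hyI.2
    have hcontk : ContinuousOn (g^[k]) (Set.Icc p y) := (hs_contOn_iterate hg hmap k).mono hsubpy
    have h1 : Set.Icc p x ⊆ g^[k] '' Set.Icc p y :=
      hs_image_Icc_subset hcontk ⟨p, Set.left_mem_Icc.2 hypos.le, hs_iterate_fix hgp k⟩
        ⟨y, Set.right_mem_Icc.2 hypos.le, hgky⟩
    have h2 : Set.Icc p x ⊆ g^[k + k] '' Set.Icc p y := by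
      intro z hz
      have hmono : g^[k] '' Set.Icc p y ⊆ g^[k] '' (g^[k] '' Set.Icc p y) :=
        Set.image_mono (subset_trans (Set.Icc_subset_Icc le_rfl hy.2.le) h1)
      have := hmono (h1 hz)
      rwa [← Set.image_comp, ← Function.iterate_add] at this
    obtain ⟨d, hd, hgd⟩ := h2 (Set.right_mem_Icc.2 hpx.le)
    have hGy : g^[k + k] y = p := by
      rw [Function.iterate_add_apply, hgky]
      exact hs_x_to_p hgp hgx k hk
    have hGp : g^[k + k] p = p := hs_iterate_fix hgp _
    have hdp : p < d := by
      rcases eq_or_lt_of_le hd.1 with h | h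
      · exfalso; rw [← h, hGp] at hgd; exact hpx.ne hgd
      · exact h
    have hdy : d < y := by
      rcases eq_or_lt_of_le hd.2 with h | h
      · exfalso; rw [h, hGy] at hgd; exact hpx.ne hgd
      · exact h
    have hcontG : ContinuousOn (g^[k + k]) (Set.Icc A B) := hs_contOn_iterate hg hmap _
    -- K1 inside [p, d]
    have hcont1 : ContinuousOn (g^[k + k]) (Set.Icc p d) :=
      hcontG.mono (Set.Icc_subset_Icc hpI.1 (le_trans hd.2 hyI.2))
    have himg1 : Set.Icc p y ⊆ g^[k + k] '' Set.Icc p d :=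
      subset_trans (Set.Icc_subset_Icc le_rfl hy.2.le)
        (hs_image_Icc_subset hcont1 ⟨p, Set.left_mem_Icc.2 hdp.le, hGp⟩
          ⟨d, Set.right_mem_Icc.2 hdp.le, hgd⟩)
    obtain ⟨l1, r1, h11, hsub1, heq1⟩ := hs_exact_preimage hdp.le hcont1 hypos.le himg1
    have hdnot1 : d ∉ Set.Icc l1 r1 := by
      intro hdin
      have : g^[k + k] d ∈ Set.Icc p y := heq1 ▸ ⟨d, hdin, rfl⟩
      rw [hgd] at this
      exact absurd this.2 (not_le.2 hy.2)
    have hr1d : r1 < d := by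
      rcases eq_or_lt_of_le (hsub1 (Set.right_mem_Icc.2 h11)).2 with h | h
      · exact absurd (h ▸ Set.right_mem_Icc.2 h11) hdnot1
      · exact h
    -- K2 inside [d, y]
    have hcont2 : ContinuousOn (g^[k + k]) (Set.Icc d y) :=
      hcontG.mono (Set.Icc_subset_Icc (le_trans hpI.1 hdp.le) hyI.2)
    have himg2 : Set.Icc p y ⊆ g^[k + k] '' Set.Icc d y :=
      subset_trans (Set.Icc_subset_Icc le_rfl hy.2.le)
        (hs_image_Icc_subset hcont2 ⟨y, Set.right_mem_Icc.2 hdy.le, hGy⟩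
          ⟨d, Set.left_mem_Icc.2 hdy.le, hgd⟩)
    obtain ⟨l2, r2, h22, hsub2, heq2⟩ := hs_exact_preimage hdy.le hcont2 hypos.le himg2
    have hdnot2 : d ∉ Set.Icc l2 r2 := by
      intro hdin
      have : g^[k + k] d ∈ Set.Icc p y := heq2 ▸ ⟨d, hdin, rfl⟩
      rw [hgd] at this
      exact absurd this.2 (not_le.2 hy.2)
    have hdl2 : d < l2 := by
      rcases eq_or_lt_of_le (hsub2 (Set.left_mem_Icc.2 h22)).1 with h | h
      · exact absurd (by rw [h]; exact Set.left_mem_Icc.2 h22) hdnot2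
      · exact h
    have hKsub : Set.Icc l1 r1 ∪ Set.Icc l2 r2 ⊆ Set.Icc p y :=
      Set.union_subset (subset_trans hsub1 (Set.Icc_subset_Icc le_rfl hdy.le))
        (subset_trans hsub2 (Set.Icc_subset_Icc hdp.le le_rfl))
    refine ⟨k + k, by omega, l1, r1, l2, r2, h11, lt_trans hr1d hdl2, h22, ?_, ?_, ?_⟩
    · exact subset_trans (Set.Icc_subset_Icc (hsub1 (Set.left_mem_Icc.2 h11)).1
        (hsub2 (Set.right_mem_Icc.2 h22)).2) hsubpy
    · rw [heq1]; exact hKsub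
    · rw [heq2]; exact hKsub
  · -- CASE B : all preimages of x near p lie to the left of p
    push_neg at hcase
    -- hcase : no preimage of x inside [p, x)
    have hB1 : ∀ v ∈ Set.Icc A B, p ≤ v → v < x → ∀ j, 1 ≤ j → g^[j] v < x := by
      intro v hvI hpv hvx j hj
      by_contra hge
      push_neg at hge
      have hcont : ContinuousOn (g^[j]) (Set.Icc p v) :=
        (hs_contOn_iterate hg hmap j).mono (Set.Icc_subset_Icc hpI.1 hvI.2)
      have hxmem : x ∈ Set.Icc (g^[j] p) (g^[j] v) := by
        rw [hs_iterate_fix hgp]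
        exact ⟨hpx.le, hge⟩
      obtain ⟨w, hw, hgw⟩ := intermediate_value_Icc hpv hcont hxmem
      exact hcase w ⟨hw.1, lt_of_le_of_lt hw.2 hvx⟩ j hj hgw
    have hpreim : ∀ δ : ℝ, 0 < δ → ∃ k, 1 ≤ k ∧ ∃ y ∈ Set.Icc A B,
        y < p ∧ p - δ < y ∧ g^[k] y = x := by
      intro δ hδ
      obtain ⟨k, hk, y, hyI, hyd, hgky⟩ := hunst (min δ (x - p)) (lt_min hδ (by linarith))
      have h1 : |y - p| < δ := lt_of_lt_of_le hyd (min_le_left _ _)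
      have h2 : |y - p| < x - p := lt_of_lt_of_le hyd (min_le_right _ _)
      have hyx : y < x := by
        have := (abs_lt.1 h2).2
        linarith
      have hynp : y < p := by
        rcases lt_or_ge y p with h | h
        · exact h
        · exact absurd hgky (hcase y ⟨h, hyx⟩ k hk)
      have h3 : p - δ < y := by
        have := (abs_lt.1 h1).1
        linarith
      exact ⟨k, hk, y, hyI, hynp, h3, hgky⟩
    set sset : Set ℝ := {w | w ∈ Set.Icc A B ∧ w < p ∧ x ≤ g w} with hsset
    obtain ⟨k₀, hk₀, y₀, hy₀I, hy₀p, _, hgk₀⟩ := hpreim 1 one_pos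
    obtain ⟨j₀, hj₀k, hj₀p, hj₀x⟩ := hs_last_left hmap hB1 hy₀I hy₀p hpx hk₀ hgk₀
    have hw₀mem : g^[j₀] y₀ ∈ sset := ⟨hmap.iterate j₀ hy₀I, hj₀p, hj₀x⟩
    have hssetne : sset.Nonempty := ⟨g^[j₀] y₀, hw₀mem⟩
    have hssetbdd : BddAbove sset := ⟨p, fun w hw => hw.2.1.le⟩
    set s := sSup sset with hs
    have hsp_le : s ≤ p := csSup_le hssetne (fun w hw => hw.2.1.le)
    have hsI : s ∈ Set.Icc A B :=
      ⟨le_trans (hmap.iterate j₀ hy₀I).1 (le_csSup hssetbdd hw₀mem), le_trans hsp_le hpI.2⟩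
    have hsub_sp : Set.Icc s p ⊆ Set.Icc A B := Set.Icc_subset_Icc hsI.1 hpI.2
    have hgs_ge : x ≤ g s := by
      have hcl : s ∈ closure sset := csSup_mem_closure hssetne hssetbdd
      have hcw : ContinuousWithinAt g sset s :=
        (hg.continuousWithinAt hsI).mono (fun w hw => hw.1)
      have h1 := hcw.mem_closure_image hcl
      have h2 : g '' sset ⊆ Set.Ici x := by rintro - ⟨w, hw, rfl⟩; exact hw.2.2
      have h3 := closure_mono h2 h1
      rwa [isClosed_Ici.closure_eq] at h3
    have hsp : s < p := by
      rcases eq_or_lt_of_le hsp_le with h | h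
      · exfalso
        rw [h, hgp] at hgs_ge
        linarith
      · exact h
    have hleft_lt : ∀ w, s < w → w < p → w ∈ Set.Icc A B → g w < x := by
      intro w h1 h2 h3
      by_contra h
      exact absurd (le_csSup hssetbdd ⟨h3, h2, le_of_not_gt h⟩) (not_le.2 h1)
    have hgs_le : g s ≤ x := by
      have hclo : s ∈ closure (Set.Ioo s p) := by
        rw [closure_Ioo hsp.ne]
        exact ⟨le_rfl, hsp.le⟩
      have hcw : ContinuousWithinAt g (Set.Ioo s p) s :=
        (hg.continuousWithinAt hsI).mono (fun w hw => hsub_sp ⟨hw.1.le, hw.2.le⟩)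
      have h1 := hcw.mem_closure_image hclo
      have h2 : g '' Set.Ioo s p ⊆ Set.Iic x := by
        rintro - ⟨w, hw, rfl⟩
        exact (hleft_lt w hw.1 hw.2 (hsub_sp ⟨hw.1.le, hw.2.le⟩)).le
      have h3 := closure_mono h2 h1
      rwa [isClosed_Iic.closure_eq] at h3
    have hgs : g s = x := le_antisymm hgs_le hgs_ge
    have hFstar : ∀ δ : ℝ, 0 < δ → ∃ y k, y ∈ Set.Icc A B ∧ s < y ∧ y < p ∧ p - δ < y ∧
        g y < p ∧ 1 ≤ k ∧ g^[k] y = x := by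
      intro δ hδ
      obtain ⟨k, hk, y, hyI, hyp, hyδ, hgky⟩ := hpreim (min δ (p - s)) (lt_min hδ (by linarith))
      have hsy : s < y := by
        have h1 := min_le_right δ (p - s)
        linarith
      have hyδ' : p - δ < y := by
        have h1 := min_le_left δ (p - s)
        linarith
      have hgyx : g y < x := hleft_lt y hsy hyp hyI
      have hgynp : g y ≠ p := by
        intro h
        obtain ⟨i, rfl⟩ : ∃ i, k = i + 1 := ⟨k - 1, by omega⟩
        rw [Function.iterate_succ_apply, h, hs_iterate_fix hgp] at hgky
        exact hpx.ne hgky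
      have hgyp : g y < p := by
        rcases lt_or_ge (g y) p with h | h
        · exact h
        · exfalso
          have hne : p < g y := lt_of_le_of_ne h (Ne.symm hgynp)
          obtain ⟨i, rfl⟩ : ∃ i, k = i + 1 := ⟨k - 1, by omega⟩
          rcases Nat.eq_zero_or_pos i with h0 | hipos
          · subst h0
            rw [zero_add, Function.iterate_one] at hgky
            rw [hgky] at hgyx
            exact lt_irrefl x hgyx
          · have hlt := hB1 (g y) (hmap hyI) h hgyx i hipos
            rw [Function.iterate_succ_apply] at hgky
            rw [hgky] at hlt
            exact lt_irrefl x hlt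
      exact ⟨y, k, hyI, hsy, hyp, hyδ', hgyp, hk, hgky⟩
    have hjw : ∀ y k, y ∈ Set.Icc A B → s < y → y < p → g y < p → 1 ≤ k → g^[k] y = x →
        ∃ j, 1 ≤ j ∧ g^[j] y ≤ s := by
      intro y k hyI _ hyp hgyp hk hgky
      obtain ⟨j, _, hjp, hjx⟩ := hs_last_left hmap hB1 hyI hyp hpx hk hgky
      have hmem : g^[j] y ∈ sset := ⟨hmap.iterate j hyI, hjp, hjx⟩
      have hj1 : 1 ≤ j := by
        rcases Nat.eq_zero_or_pos j with h0 | hjpos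
        · exfalso
          subst h0
          rw [Function.iterate_zero_apply] at hjx
          linarith
        · exact hjpos
      exact ⟨j, hj1, le_csSup hssetbdd hmem⟩
    have hcov : ∀ y k, y ∈ Set.Icc A B → s < y → y < p → g y < p → 1 ≤ k → g^[k] y = x →
        ∃ j, 1 ≤ j ∧ Set.Icc s p ⊆ g^[j] '' Set.Icc y p := by
      intro y k hyI hsy hyp hgyp hk hgky
      obtain ⟨j, hj1, hjs⟩ := hjw y k hyI hsy hyp hgyp hk hgky
      have hcont : ContinuousOn (g^[j]) (Set.Icc y p) :=
        (hs_contOn_iterate hg hmap j).mono (Set.Icc_subset_Icc hyI.1 hpI.2)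
      have himg := hs_image_Icc_subset hcont
        ⟨y, Set.left_mem_Icc.2 hyp.le, rfl⟩ ⟨p, Set.right_mem_Icc.2 hyp.le, hs_iterate_fix hgp j⟩
      exact ⟨j, hj1, subset_trans (Set.Icc_subset_Icc hjs le_rfl) himg⟩
    obtain ⟨y1, k1, hy1I, hsy1, hy1p, _, hgy1p, hk1, hgky1⟩ := hFstar 1 one_pos
    obtain ⟨jV, hjV1, hjVs⟩ := hjw y1 k1 hy1I hsy1 hy1p hgy1p hk1 hgky1
    have hVcov : Set.Icc s p ⊆ g^[jV] '' Set.Icc s y1 := by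
      have hcont : ContinuousOn (g^[jV]) (Set.Icc s y1) :=
        (hs_contOn_iterate hg hmap jV).mono (Set.Icc_subset_Icc hsI.1 hy1I.2)
      have hps : p ≤ g^[jV] s := by
        rcases eq_or_lt_of_le hjV1 with h1 | h2
        · rw [← h1, Function.iterate_one, hgs]
          exact hpx.le
        · obtain ⟨i, rfl⟩ : ∃ i, jV = i + 1 := ⟨jV - 1, by omega⟩
          rw [Function.iterate_succ_apply, hgs, hs_x_to_p hgp hgx i (by omega)]
      have himg := hs_image_Icc_subset hcont
        ⟨y1, Set.right_mem_Icc.2 hsy1.le, rfl⟩ ⟨s, Set.left_mem_Icc.2 hsy1.le, rfl⟩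
      exact subset_trans (Set.Icc_subset_Icc hjVs hps) himg
    obtain ⟨y2, k2, hy2I, hsy2, hy2p, hy2gt, hgy2p, hk2, hgky2⟩ := hFstar (p - y1) (by linarith)
    have hy1y2 : y1 < y2 := by linarith
    obtain ⟨α, hα1, hUcov⟩ := hcov y2 k2 hy2I hsy2 hy2p hgy2p hk2 hgky2
    have hpow : ∀ (a : ℕ) (W : Set ℝ), W ⊆ Set.Icc s p →
        Set.Icc s p ⊆ g^[a] '' W → ∀ i, 1 ≤ i → Set.Icc s p ⊆ g^[a * i] '' W := by
      intro a W hW hcover i hi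
      induction i with
      | zero => omega
      | succ i ih =>
          rcases Nat.eq_zero_or_pos i with h0 | hipos
          · subst h0
            simpa using hcover
          · have hprev := ih hipos
            have hmono : g^[a] '' W ⊆ g^[a] '' (g^[a * i] '' W) :=
              Set.image_mono (subset_trans hW hprev)
            have hcomp : g^[a] '' (g^[a * i] '' W) = g^[a * (i + 1)] '' W := by
              rw [← Set.image_comp, ← Function.iterate_add]
              congr 2
              ring
            exact subset_trans hcover (hcomp ▸ hmono)
    have hVsub : Set.Icc s y1 ⊆ Set.Icc s p := Set.Icc_subset_Icc le_rfl hy1p.le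
    have hUsub : Set.Icc y2 p ⊆ Set.Icc s p := Set.Icc_subset_Icc hsy2.le le_rfl
    have hVN := hpow jV _ hVsub hVcov α hα1
    have hUN := hpow α _ hUsub hUcov jV hjV1
    have hKsub : Set.Icc s y1 ∪ Set.Icc y2 p ⊆ Set.Icc s p := Set.union_subset hVsub hUsub
    refine ⟨α * jV, Nat.mul_pos hα1 hjV1, s, y1, y2, p, hsy1.le, hy1y2, hy2p.le, hsub_sp, ?_, ?_⟩
    · have : Set.Icc s p ⊆ g^[α * jV] '' Set.Icc s y1 := by
        rw [mul_comm]
        exact hVN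
      exact subset_trans hKsub this
    · exact subset_trans hKsub hUN

lemma hs_neg_iterate (g : ℝ → ℝ) : ∀ k t, (fun u => -g (-u))^[k] t = -g^[k] (-t) := by
  intro k
  induction k with
  | zero => intro t; simp
  | succ k ih =>
      intro t
      rw [Function.iterate_succ_apply, Function.iterate_succ_apply, ih, neg_neg]

lemma hs_horseshoe_left {g : ℝ → ℝ} {A B p x : ℝ}
    (hg : ContinuousOn g (Set.Icc A B)) (hmap : Set.MapsTo g (Set.Icc A B) (Set.Icc A B))
    (hpI : p ∈ Set.Icc A B) (hgp : g p = p) (hxI : x ∈ Set.Icc A B)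
    (hxp : x < p) (hgx : g x = p)
    (hunst : ∀ δ : ℝ, 0 < δ → ∃ k, 1 ≤ k ∧ ∃ y ∈ Set.Icc A B, |y - p| < δ ∧ g^[k] y = x) :
    ∃ N, 1 ≤ N ∧ ∃ l1 r1 l2 r2, l1 ≤ r1 ∧ r1 < l2 ∧ l2 ≤ r2 ∧
      Set.Icc l1 r2 ⊆ Set.Icc A B ∧
      Set.Icc l1 r1 ∪ Set.Icc l2 r2 ⊆ g^[N] '' Set.Icc l1 r1 ∧
      Set.Icc l1 r1 ∪ Set.Icc l2 r2 ⊆ g^[N] '' Set.Icc l2 r2 := by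
  set G : ℝ → ℝ := fun u => -g (-u) with hG
  have hmapsneg : Set.MapsTo (fun u : ℝ => -u) (Set.Icc (-B) (-A)) (Set.Icc A B) := by
    intro t ht
    simp only [Set.mem_Icc] at ht ⊢
    constructor <;> linarith [ht.1, ht.2]
  have hGcont : ContinuousOn G (Set.Icc (-B) (-A)) :=
    ((hg.comp (continuous_neg.continuousOn) hmapsneg).neg)
  have hGmap : Set.MapsTo G (Set.Icc (-B) (-A)) (Set.Icc (-B) (-A)) := by
    intro t ht
    have := hmap (hmapsneg ht)
    simp only [Set.mem_Icc] at this ⊢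
    constructor <;> simp only [hG] <;> linarith [this.1, this.2]
  have hpI' : -p ∈ Set.Icc (-B) (-A) := by
    simp only [Set.mem_Icc]
    constructor <;> linarith [hpI.1, hpI.2]
  have hxI' : -x ∈ Set.Icc (-B) (-A) := by
    simp only [Set.mem_Icc]
    constructor <;> linarith [hxI.1, hxI.2]
  have hGp : G (-p) = -p := by simp only [hG, neg_neg, hgp]
  have hGx : G (-x) = -p := by simp only [hG, neg_neg, hgx]
  have hunst' : ∀ δ : ℝ, 0 < δ → ∃ k, 1 ≤ k ∧ ∃ y ∈ Set.Icc (-B) (-A),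
      |y - (-p)| < δ ∧ G^[k] y = -x := by
    intro δ hδ
    obtain ⟨k, hk, y, hyI, hyd, hgky⟩ := hunst δ hδ
    refine ⟨k, hk, -y, ?_, ?_, ?_⟩
    · simp only [Set.mem_Icc]
      constructor <;> linarith [hyI.1, hyI.2]
    · have : -y - -p = -(y - p) := by ring
      rw [this, abs_neg]
      exact hyd
    · rw [hs_neg_iterate g k (-y), neg_neg, hgky]
  obtain ⟨N, hN, l1, r1, l2, r2, h11, h12, h22, hsub, him1, him2⟩ :=
    hs_horseshoe_right hGcont hGmap hpI' hGp hxI' (by linarith) hGx hunst'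
  have hl1 : l1 ∈ Set.Icc (-B) (-A) := hsub ⟨le_rfl, le_trans h11 (le_trans h12.le h22)⟩
  have hr2 : r2 ∈ Set.Icc (-B) (-A) := hsub ⟨le_trans h11 (le_trans h12.le h22), le_rfl⟩
  refine ⟨N, hN, -r2, -l2, -r1, -l1, by linarith, by linarith, by linarith, ?_, ?_, ?_⟩
  · intro t ht
    simp only [Set.mem_Icc] at ht ⊢
    constructor <;> linarith [ht.1, ht.2, hl1.1, hl1.2, hr2.1, hr2.2]
  · rintro z (hz | hz)
    · have h1 : -z ∈ Set.Icc l2 r2 := by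
        simp only [Set.mem_Icc] at hz ⊢
        constructor <;> linarith [hz.1, hz.2]
      obtain ⟨τ, hτ, hGτ⟩ := him2 (Set.mem_union_right _ h1)
      rw [hs_neg_iterate g N (τ)] at hGτ
      refine ⟨-τ, ?_, ?_⟩
      · simp only [Set.mem_Icc] at hτ ⊢
        constructor <;> linarith [hτ.1, hτ.2]
      · have : g^[N] (-τ) = z := by
          have := congrArg Neg.neg hGτ
          simpa using this
        exact this
    · have h1 : -z ∈ Set.Icc l1 r1 := by
        simp only [Set.mem_Icc] at hz ⊢
        constructor <;> linarith [hz.1, hz.2]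
      obtain ⟨τ, hτ, hGτ⟩ := him2 (Set.mem_union_left _ h1)
      rw [hs_neg_iterate g N (τ)] at hGτ
      refine ⟨-τ, ?_, ?_⟩
      · simp only [Set.mem_Icc] at hτ ⊢
        constructor <;> linarith [hτ.1, hτ.2]
      · have := congrArg Neg.neg hGτ
        simpa using this
  · rintro z (hz | hz)
    · have h1 : -z ∈ Set.Icc l2 r2 := by
        simp only [Set.mem_Icc] at hz ⊢
        constructor <;> linarith [hz.1, hz.2]
      obtain ⟨τ, hτ, hGτ⟩ := him1 (Set.mem_union_right _ h1)
      rw [hs_neg_iterate g N (τ)] at hGτ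
      refine ⟨-τ, ?_, ?_⟩
      · simp only [Set.mem_Icc] at hτ ⊢
        constructor <;> linarith [hτ.1, hτ.2]
      · have := congrArg Neg.neg hGτ
        simpa using this
    · have h1 : -z ∈ Set.Icc l1 r1 := by
        simp only [Set.mem_Icc] at hz ⊢
        constructor <;> linarith [hz.1, hz.2]
      obtain ⟨τ, hτ, hGτ⟩ := him1 (Set.mem_union_left _ h1)
      rw [hs_neg_iterate g N (τ)] at hGτ
      refine ⟨-τ, ?_, ?_⟩
      · simp only [Set.mem_Icc] at hτ ⊢
        constructor <;> linarith [hτ.1, hτ.2]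
      · have := congrArg Neg.neg hGτ
        simpa using this

lemma hs_itinerary {f : ℝ → ℝ} {A B : ℝ} (hf : ContinuousOn f (Set.Icc A B))
    (hmap : Set.MapsTo f (Set.Icc A B) (Set.Icc A B))
    {P : ℕ} {l1 r1 l2 r2 : ℝ} (h11 : l1 ≤ r1) (h12 : r1 < l2) (h22 : l2 ≤ r2)
    (hsub : Set.Icc l1 r2 ⊆ Set.Icc A B)
    (him1 : Set.Icc l1 r1 ∪ Set.Icc l2 r2 ⊆ f^[P] '' Set.Icc l1 r1)
    (him2 : Set.Icc l1 r1 ∪ Set.Icc l2 r2 ⊆ f^[P] '' Set.Icc l2 r2) :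
    ∀ (j : ℕ) (w : ℕ → Bool), ∃ c d, c ≤ d ∧
      ∀ i, i ≤ j → f^[P * i] '' Set.Icc c d ⊆
        (if w i then Set.Icc l1 r1 else Set.Icc l2 r2) := by
  have hK1I : Set.Icc l1 r1 ⊆ Set.Icc A B :=
    subset_trans (Set.Icc_subset_Icc le_rfl (le_trans h12.le h22)) hsub
  have hK2I : Set.Icc l2 r2 ⊆ Set.Icc A B :=
    subset_trans (Set.Icc_subset_Icc (le_trans h11 h12.le) le_rfl) hsub
  intro j
  induction j with
  | zero =>
      intro w
      cases hw : w 0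
      · refine ⟨l2, r2, h22, ?_⟩
        intro i hi
        obtain rfl : i = 0 := Nat.le_zero.1 hi
        simp [hw]
      · refine ⟨l1, r1, h11, ?_⟩
        intro i hi
        obtain rfl : i = 0 := Nat.le_zero.1 hi
        simp [hw]
  | succ j ih =>
      intro w
      obtain ⟨c', d', hcd', hprop⟩ := ih (fun i => w (i + 1))
      have hsub1 : Set.Icc c' d' ⊆ Set.Icc l1 r1 ∪ Set.Icc l2 r2 := by
        have h0 := hprop 0 (Nat.zero_le j)
        rw [Nat.mul_zero, Function.iterate_zero, Set.image_id] at h0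
        cases hw1 : w 1
        · simp only [hw1, if_false] at h0
          exact subset_trans h0 (Set.subset_union_right)
        · simp only [hw1, if_true] at h0
          exact subset_trans h0 (Set.subset_union_left)
      cases hw0 : w 0
      · -- w 0 = false : start in K2 = [l2, r2]
        have himg : Set.Icc c' d' ⊆ f^[P] '' Set.Icc l2 r2 := subset_trans hsub1 him2
        have hcont : ContinuousOn (f^[P]) (Set.Icc l2 r2) :=
          (hs_contOn_iterate hf hmap P).mono hK2I
        obtain ⟨c, d, hcd, hsubK, heq⟩ := hs_exact_preimage h22 hcont hcd' himg
        refine ⟨c, d, hcd, ?_⟩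
        intro i hi
        match i with
        | 0 => rw [Nat.mul_zero, Function.iterate_zero, Set.image_id]; simpa [hw0] using hsubK
        | (i + 1) =>
            have hstep : f^[P * (i + 1)] '' Set.Icc c d = f^[P * i] '' Set.Icc c' d' := by
              rw [← heq, ← Set.image_comp, ← Function.iterate_add, Nat.mul_succ]
            rw [hstep]
            simpa using hprop i (by omega)
      · have himg : Set.Icc c' d' ⊆ f^[P] '' Set.Icc l1 r1 := subset_trans hsub1 him1
        have hcont : ContinuousOn (f^[P]) (Set.Icc l1 r1) :=
          (hs_contOn_iterate hf hmap P).mono hK1I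
        obtain ⟨c, d, hcd, hsubK, heq⟩ := hs_exact_preimage h11 hcont hcd' himg
        refine ⟨c, d, hcd, ?_⟩
        intro i hi
        match i with
        | 0 => rw [Nat.mul_zero, Function.iterate_zero, Set.image_id]; simpa [hw0] using hsubK
        | (i + 1) =>
            have hstep : f^[P * (i + 1)] '' Set.Icc c d = f^[P * i] '' Set.Icc c' d' := by
              rw [← heq, ← Set.image_comp, ← Function.iterate_add, Nat.mul_succ]
            rw [hstep]
            simpa using hprop i (by omega)

lemma hs_sepCard_ge {f : ℝ → ℝ} {A B : ℝ} (hf : ContinuousOn f (Set.Icc A B))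
    (hmap : Set.MapsTo f (Set.Icc A B) (Set.Icc A B))
    {P : ℕ} (hP : 1 ≤ P) {l1 r1 l2 r2 : ℝ} (h11 : l1 ≤ r1) (h12 : r1 < l2) (h22 : l2 ≤ r2)
    (hsub : Set.Icc l1 r2 ⊆ Set.Icc A B)
    (him1 : Set.Icc l1 r1 ∪ Set.Icc l2 r2 ⊆ f^[P] '' Set.Icc l1 r1)
    (him2 : Set.Icc l1 r1 ∪ Set.Icc l2 r2 ⊆ f^[P] '' Set.Icc l2 r2) :
    ∀ j, 1 ≤ j → (2 ^ j : ℝ≥0∞) ≤ sepCard f (Set.Icc A B) (P * j) ((l2 - r1) / 2) := by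
  intro j hj
  classical
  have hK1I : Set.Icc l1 r1 ⊆ Set.Icc A B :=
    subset_trans (Set.Icc_subset_Icc le_rfl (le_trans h12.le h22)) hsub
  have hK2I : Set.Icc l2 r2 ⊆ Set.Icc A B :=
    subset_trans (Set.Icc_subset_Icc (le_trans h11 h12.le) le_rfl) hsub
  have hpick : ∀ w : Fin j → Bool, ∃ z : ℝ, ∀ i : ℕ, (hij : i < j) →
      f^[P * i] z ∈ (if w ⟨i, hij⟩ then Set.Icc l1 r1 else Set.Icc l2 r2) := by
    intro w
    obtain ⟨c, d, hcd, hprop⟩ := hs_itinerary hf hmap h11 h12 h22 hsub him1 him2 (j - 1)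
      (fun i => if h : i < j then w ⟨i, h⟩ else true)
    refine ⟨c, fun i hij => ?_⟩
    have h1 := hprop i (by omega)
    have h2 : f^[P * i] c ∈ f^[P * i] '' Set.Icc c d := ⟨c, ⟨le_rfl, hcd⟩, rfl⟩
    have h3 := h1 h2
    simpa only [dif_pos hij] using h3
  choose Z hZ using hpick
  have hdisj : ∀ z : ℝ, z ∈ Set.Icc l1 r1 → z ∈ Set.Icc l2 r2 → False := by
    intro z hz1 hz2
    have := hz1.2
    have := hz2.1
    linarith
  have hmem2 : ∀ (w : Fin j → Bool) (i : ℕ) (hij : i < j),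
      f^[P * i] (Z w) ∈ Set.Icc l1 r1 ∪ Set.Icc l2 r2 := by
    intro w i hij
    have := hZ w i hij
    cases hwi : w ⟨i, hij⟩
    · rw [hwi] at this
      simp only [Bool.false_eq_true, if_false] at this
      exact Set.mem_union_right _ this
    · rw [hwi] at this
      simp only [if_true] at this
      exact Set.mem_union_left _ this
  have hinj : Function.Injective Z := by
    intro w w' hww
    by_contra hne
    obtain ⟨i, hi⟩ := Function.ne_iff.1 hne
    have h1 := hZ w i i.isLt
    have h2 := hZ w' i i.isLt
    rw [hww] at h1
    have hfin : (⟨(i : ℕ), i.isLt⟩ : Fin j) = i := rfl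
    rw [hfin] at h1 h2
    cases hwi : w i <;> cases hwi' : w' i
    · exact hi (hwi.trans hwi'.symm)
    · rw [hwi] at h1
      rw [hwi'] at h2
      simp only [Bool.false_eq_true, if_false, if_true] at h1 h2
      exact hdisj _ h2 h1
    · rw [hwi] at h1
      rw [hwi'] at h2
      simp only [Bool.false_eq_true, if_false, if_true] at h1 h2
      exact hdisj _ h1 h2
    · exact hi (hwi.trans hwi'.symm)
  set S : Finset ℝ := Finset.image Z Finset.univ with hS
  have hcard : S.card = 2 ^ j := by
    rw [hS, Finset.card_image_of_injective Finset.univ hinj, Finset.card_univ]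
    simp
  have hSI : ↑S ⊆ Set.Icc A B := by
    intro z hz
    simp only [hS, Finset.coe_image, Set.mem_image] at hz
    obtain ⟨w, -, rfl⟩ := hz
    have := hmem2 w 0 (by omega)
    rw [Nat.mul_zero, Function.iterate_zero_apply] at this
    rcases this with h | h
    · exact hK1I h
    · exact hK2I h
  have hsep2 : ∀ a b : ℝ, a ∈ Set.Icc l1 r1 → b ∈ Set.Icc l2 r2 →
      (l2 - r1) / 2 < |a - b| := by
    intro a b ha hb
    rw [abs_sub_comm]
    have h := le_abs_self (b - a)
    have := ha.2
    have := hb.1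
    linarith
  apply le_sSup
  refine ⟨S, hSI, ?_, ?_⟩
  · rw [hcard]
    push_cast
    ring
  · intro z hz z' hz' hne
    simp only [hS, Finset.mem_image] at hz hz'
    obtain ⟨w, -, rfl⟩ := hz
    obtain ⟨w', -, rfl⟩ := hz'
    have hww : w ≠ w' := fun h => hne (by rw [h])
    obtain ⟨i, hi⟩ := Function.ne_iff.1 hww
    refine ⟨P * i, ?_, ?_⟩
    · have h0 := i.isLt
      have hP0 : 0 < P := hP
      exact (Nat.mul_lt_mul_left hP0).2 h0
    · have h1 := hZ w i i.isLt
      have h2 := hZ w' i i.isLt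
      have hfin : (⟨(i : ℕ), i.isLt⟩ : Fin j) = i := rfl
      rw [hfin] at h1 h2
      cases hwi : w i <;> cases hwi' : w' i
      · exact absurd (hwi.trans hwi'.symm) hi
      · rw [hwi] at h1
        rw [hwi'] at h2
        simp only [Bool.false_eq_true, if_false, if_true] at h1 h2
        rw [abs_sub_comm]
        exact hsep2 _ _ h2 h1
      · rw [hwi] at h1
        rw [hwi'] at h2
        simp only [Bool.false_eq_true, if_false, if_true] at h1 h2
        exact hsep2 _ _ h1 h2
      · exact absurd (hwi.trans hwi'.symm) hi

lemma hs_entropy_pos {f : ℝ → ℝ} {I : Set ℝ} {P : ℕ} (hP : 1 ≤ P) {ε : ℝ} (hε : 0 < ε)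
    (hsep : ∀ j, 1 ≤ j → (2 ^ j : ℝ≥0∞) ≤ sepCard f I (P * j) ε) :
    0 < topEntropy f I := by
  set C : EReal := ((Real.log 2 / P : ℝ) : EReal) with hC
  have hCpos : (0 : EReal) < C := by
    rw [hC]
    have h : (0 : ℝ) < Real.log 2 / P :=
      div_pos (Real.log_pos one_lt_two) (by exact_mod_cast hP)
    exact_mod_cast h
  have hlog2 : ENNReal.log 2 = ((Real.log 2 : ℝ) : EReal) := by
    rw [show (2 : ℝ≥0∞) = ENNReal.ofReal 2 by norm_num,
      ENNReal.log_ofReal_of_pos (by norm_num)]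
  have key : ∀ j, 1 ≤ j →
      C ≤ ENNReal.log (sepCard f I (P * j) ε) / ((P * j : ℕ) : EReal) := by
    intro j hj
    have h1 : ENNReal.log ((2 : ℝ≥0∞) ^ j) ≤ ENNReal.log (sepCard f I (P * j) ε) :=
      ENNReal.log_monotone (hsep j hj)
    have h2 : ENNReal.log ((2 : ℝ≥0∞) ^ j) = ((j * Real.log 2 : ℝ) : EReal) := by
      rw [ENNReal.log_pow, hlog2, ← EReal.coe_coe_eq_natCast, ← EReal.coe_mul]
    have h3 : (0 : EReal) ≤ ((P * j : ℕ) : EReal) := by exact_mod_cast (Nat.zero_le _)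
    have h4 := EReal.div_le_div_right_of_nonneg h3 h1
    refine le_trans (le_of_eq ?_) h4
    rw [h2, show ((P * j : ℕ) : EReal) = (((P * j : ℕ) : ℝ) : EReal) from
      (EReal.coe_coe_eq_natCast _).symm, ← EReal.coe_div, hC]
    norm_cast
    have hj0 : (j : ℝ) ≠ 0 := by positivity
    have hP0 : (P : ℝ) ≠ 0 := by positivity
    push_cast
    field_simp
  have hfreq : ∃ᶠ n in atTop,
      C ≤ ENNReal.log (sepCard f I n ε) / (n : EReal) := by
    rw [Filter.frequently_atTop]
    intro a
    refine ⟨P * max a 1, ?_, key (max a 1) (le_max_right a 1)⟩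
    calc a ≤ max a 1 := le_max_left a 1
      _ ≤ P * max a 1 := Nat.le_mul_of_pos_left _ (by omega)
  have hlims : C ≤ Filter.limsup
      (fun n : ℕ => ENNReal.log (sepCard f I n ε) / (n : EReal)) atTop :=
    le_limsup_of_frequently_le' hfreq
  have hle : Filter.limsup
      (fun n : ℕ => ENNReal.log (sepCard f I n ε) / (n : EReal)) atTop ≤ topEntropy f I :=
    le_iSup₂ (f := fun (ε' : ℝ) (_ : 0 < ε') => Filter.limsup
      (fun n : ℕ => ENNReal.log (sepCard f I n ε') / (n : EReal)) atTop) ε hε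
  exact lt_of_lt_of_le hCpos (le_trans hlims hle)

lemma hs_final {f : ℝ → ℝ} {A B : ℝ} (hf : ContinuousOn f (Set.Icc A B))
    (hmap : Set.MapsTo f (Set.Icc A B) (Set.Icc A B)) {n N : ℕ} (hn : 1 ≤ n) (hN : 1 ≤ N)
    {l1 r1 l2 r2 : ℝ} (h11 : l1 ≤ r1) (h12 : r1 < l2) (h22 : l2 ≤ r2)
    (hsub : Set.Icc l1 r2 ⊆ Set.Icc A B)
    (him1 : Set.Icc l1 r1 ∪ Set.Icc l2 r2 ⊆ (f^[n])^[N] '' Set.Icc l1 r1)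
    (him2 : Set.Icc l1 r1 ∪ Set.Icc l2 r2 ⊆ (f^[n])^[N] '' Set.Icc l2 r2) :
    0 < topEntropy f (Set.Icc A B) := by
  have hPN : 1 ≤ n * N := Nat.mul_pos hn hN
  have hrw : (f^[n])^[N] = f^[n * N] := (Function.iterate_mul f n N).symm
  rw [hrw] at him1 him2
  have hε : 0 < (l2 - r1) / 2 := by linarith
  exact hs_entropy_pos hPN hε (hs_sepCard_ge hf hmap hPN h11 h12 h22 hsub him1 him2)

/-- A homoclinic point forces positive topological entropy ([Bl]). -/
theorem pos_entropy_of_homoclinic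
    (A B : ℝ) (f : ℝ → ℝ)
    (hf : ContinuousOn f (Set.Icc A B))
    (hmap : Set.MapsTo f (Set.Icc A B) (Set.Icc A B))
    (p : ℝ) (n : ℕ) (hn : 1 ≤ n) (hpI : p ∈ Set.Icc A B)
    (hper : Function.IsPeriodicPt f n p)
    (x : ℝ) (hxp : x ≠ p)
    (hxu : x ∈ unstableManifold (f^[n]) (Set.Icc A B) p)
    (m : ℕ) (hm : 1 ≤ m) (hhom : f^[m * n] x = p) :
    0 < topEntropy f (Set.Icc A B) := by
  classical
  obtain ⟨hxI, hxW⟩ := hxu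
  set g := f^[n] with hg
  have hgc : ContinuousOn g (Set.Icc A B) := hs_contOn_iterate hf hmap n
  have hgmap : Set.MapsTo g (Set.Icc A B) (Set.Icc A B) := hmap.iterate n
  have hgp : g p = p := hper
  have hEx : ∃ j, 1 ≤ j ∧ g^[j] x = p := by
    refine ⟨m, hm, ?_⟩
    rw [hg, ← Function.iterate_mul, Nat.mul_comm]
    exact hhom
  obtain ⟨m1, ⟨hm1ge, hm1eq⟩, hm1min⟩ :
      ∃ m1, (1 ≤ m1 ∧ g^[m1] x = p) ∧ ∀ j, j < m1 → ¬(1 ≤ j ∧ g^[j] x = p) :=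
    ⟨Nat.find hEx, Nat.find_spec hEx, fun j hj => Nat.find_min hEx hj⟩
  set x' := g^[m1 - 1] x with hx'
  have hx'I : x' ∈ Set.Icc A B := hgmap.iterate _ hxI
  have hgx' : g x' = p := by
    have he : m1 - 1 + 1 = m1 := by omega
    calc g x' = g^[m1 - 1 + 1] x := (Function.iterate_succ_apply' g (m1 - 1) x).symm
      _ = p := by rw [he]; exact hm1eq
  have hx'p : x' ≠ p := by
    intro h
    have h' : g^[m1 - 1] x = p := by rw [← hx']; exact h
    by_cases hm11 : m1 = 1
    · rw [hm11] at h'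
      simp only [Nat.sub_self, Function.iterate_zero_apply] at h'
      exact hxp h'
    · exact hm1min (m1 - 1) (by omega) ⟨by omega, h'⟩
  have hunst' : ∀ δ : ℝ, 0 < δ → ∃ k, 1 ≤ k ∧ ∃ y ∈ Set.Icc A B,
      |y - p| < δ ∧ g^[k] y = x' := by
    intro δ hδ
    obtain ⟨k, hk, z, hz, hgkz⟩ :=
      hxW (Metric.ball p δ) Metric.isOpen_ball (Metric.mem_ball_self hδ)
    refine ⟨(m1 - 1) + k, by omega, z, hz.2, ?_, ?_⟩
    · have hb := hz.1
      rw [Metric.mem_ball, Real.dist_eq] at hb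
      exact hb
    · rw [Function.iterate_add_apply, hgkz]
  rcases lt_or_gt_of_ne hx'p with hlt | hgt
  · obtain ⟨N, hN, l1, r1, l2, r2, h11, h12, h22, hsub, him1, him2⟩ :=
      hs_horseshoe_left hgc hgmap hpI hgp hx'I hlt hgx' hunst'
    exact hs_final hf hmap hn hN h11 h12 h22 hsub him1 him2
  · obtain ⟨N, hN, l1, r1, l2, r2, h11, h12, h22, hsub, him1, him2⟩ :=
      hs_horseshoe_right hgc hgmap hpI hgp hx'I hgt hgx' hunst'
    exact hs_final hf hmap hn hN h11 h12 h22 hsub him1 him2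
end

section
/- Let f : I → I be continuous on a compact interval with a fixed point p, and suppose there exist points a < b in I with p ∈ [a,b] ⊆ W^u(p,f), a point y ∈ (a,b), y ≠ p, and k ≥ 1 with f^k(y) = p. Then f has a periodic point whose period is not a power of 2, and hence the set of periods of f is not contained in {2^n : n ∈ ℕ}. -/
open Set Function



lemma pullback_sorted (g : ℝ → ℝ) (u v c d a b : ℝ) (huv : u ≤ v)
    (hg : ContinuousOn g (Icc u v)) (hcd : c ≤ d)
    (ha : a ∈ Icc u v) (hb : b ∈ Icc u v) (hab : a ≤ b)
    (hga : g a = c) (hgb : g b = d) :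
    ∃ u' v', u ≤ u' ∧ u' ≤ v' ∧ v' ≤ v ∧ g '' Icc u' v' = Icc c d := by
  have hsubI : Icc a b ⊆ Icc u v := Icc_subset_Icc ha.1 hb.2
  have hgc : ContinuousOn g (Icc a b) := hg.mono hsubI
  set T : Set ℝ := {x ∈ Icc a b | g x = d} with hT
  have hTclosed : IsClosed T := by
    have h1 := hgc.preimage_isClosed_of_isClosed isClosed_Icc
      (isClosed_singleton (x := d))
    convert h1 using 1
    rfl
  have hTne : T.Nonempty := ⟨b, ⟨⟨hab, le_rfl⟩, hgb⟩⟩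
  have hTbdd : BddBelow T := ⟨a, fun x hx => hx.1.1⟩
  set b' := sInf T with hb'
  have hb'T : b' ∈ T := hTclosed.csInf_mem hTne hTbdd
  have hab' : a ≤ b' := hb'T.1.1
  set S : Set ℝ := {x ∈ Icc a b' | g x = c} with hS
  have hSclosed : IsClosed S := by
    have h1 := (hgc.mono (Icc_subset_Icc le_rfl hb'T.1.2)).preimage_isClosed_of_isClosed
      isClosed_Icc (isClosed_singleton (x := c))
    convert h1 using 1
    rfl
  have hSne : S.Nonempty := ⟨a, ⟨⟨le_rfl, hab'⟩, hga⟩⟩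
  have hSbdd : BddAbove S := ⟨b', fun x hx => hx.1.2⟩
  set a' := sSup S with ha'
  have ha'S : a' ∈ S := hSclosed.csSup_mem hSne hSbdd
  have ha'b' : a' ≤ b' := ha'S.1.2
  have haa' : a ≤ a' := ha'S.1.1
  have hsub' : Icc a' b' ⊆ Icc a b := Icc_subset_Icc haa' hb'T.1.2
  refine ⟨a', b', le_trans ha.1 haa', ha'b', le_trans hb'T.1.2 hb.2, ?_⟩
  apply le_antisymm
  · rintro _ ⟨x, hx, rfl⟩
    by_contra hmem
    rw [mem_Icc, not_and_or, not_le, not_le] at hmem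
    rcases hmem with hlt | hlt
    · have hmemd : c ∈ Icc (g x) (g b') := ⟨hlt.le, by rw [hb'T.2]; exact hcd⟩
      have hcont : ContinuousOn g (Icc x b') := (hgc.mono hsub').mono (Icc_subset_Icc hx.1 le_rfl)
      obtain ⟨t, ht, hgt⟩ := intermediate_value_Icc hx.2 hcont hmemd
      have htS : t ∈ S := ⟨⟨le_trans haa' (le_trans hx.1 ht.1), ht.2⟩, hgt⟩
      have hta : t ≤ a' := le_csSup hSbdd htS
      have hxa : x ≠ a' := fun h => by rw [h, ha'S.2] at hlt; exact lt_irrefl _ hlt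
      have hax : a' < x := lt_of_le_of_ne hx.1 (Ne.symm hxa)
      linarith [ht.1]
    · have hmemd : d ∈ Icc (g a') (g x) := ⟨by rw [ha'S.2]; exact hcd, hlt.le⟩
      have hcont : ContinuousOn g (Icc a' x) := (hgc.mono hsub').mono (Icc_subset_Icc le_rfl hx.2)
      obtain ⟨t, ht, hgt⟩ := intermediate_value_Icc hx.1 hcont hmemd
      have htT : t ∈ T :=
        ⟨⟨le_trans haa' (le_trans (le_refl a') ht.1), le_trans ht.2 (le_trans hx.2 hb'T.1.2)⟩, hgt⟩
      have htb : b' ≤ t := csInf_le hTbdd htT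
      have hxb : x ≠ b' := fun h => by rw [h, hb'T.2] at hlt; exact lt_irrefl _ hlt
      have hxb' : x < b' := lt_of_le_of_ne hx.2 hxb
      linarith [ht.2]
  · have h2 := intermediate_value_Icc ha'b' (hgc.mono hsub')
    rw [ha'S.2, hb'T.2] at h2
    exact h2


lemma pullback (g : ℝ → ℝ) (u v c d : ℝ) (huv : u ≤ v)
    (hg : ContinuousOn g (Icc u v)) (hcd : c ≤ d)
    (hsub : Icc c d ⊆ g '' Icc u v) :
    ∃ u' v', u ≤ u' ∧ u' ≤ v' ∧ v' ≤ v ∧ g '' Icc u' v' = Icc c d := by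
  obtain ⟨a, ha, hga⟩ := hsub (left_mem_Icc.2 hcd)
  obtain ⟨b, hb, hgb⟩ := hsub (right_mem_Icc.2 hcd)
  rcases le_total a b with hab | hba
  · exact pullback_sorted g u v c d a b huv hg hcd ha hb hab hga hgb
  · -- reflect
    set r : ℝ → ℝ := fun x => u + v - x with hr
    have hrmem : ∀ x, x ∈ Icc u v → r x ∈ Icc u v := by
      intro x hx; simp only [hr, mem_Icc] at *; constructor <;> linarith [hx.1, hx.2]
    have hrc : Continuous r := by continuity
    have hgr : ContinuousOn (g ∘ r) (Icc u v) := hg.comp hrc.continuousOn hrmem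
    obtain ⟨u', v', h1, h2, h3, h4⟩ := pullback_sorted (g ∘ r) u v c d (r a) (r b) huv hgr hcd
      (hrmem a ha) (hrmem b hb) (by simp [hr]; linarith)
      (by simp [hr, hga]) (by simp [hr, hgb])
    refine ⟨u + v - v', u + v - u', by linarith, by linarith, by linarith, ?_⟩
    have himg : r '' Icc (u + v - v') (u + v - u') = Icc u' v' := by
      rw [show r = (fun x => (u+v) - x) from rfl, Set.image_const_sub_Icc]
      norm_num
    calc g '' Icc (u + v - v') (u + v - u')
        = g '' (r '' (r '' Icc (u + v - v') (u + v - u'))) := by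
          congr 1; ext x; simp [hr]
      _ = (g ∘ r) '' (r '' Icc (u + v - v') (u + v - u')) := by rw [Set.image_comp]
      _ = (g ∘ r) '' Icc u' v' := by rw [himg]
      _ = Icc c d := h4

/-- A horseshoe `J=[α,β], K=[β,γ]` with both images covering `[α,γ]` and `g β ≠ β`
    yields a point of minimal period 3. -/
lemma horseshoe_min3 (g : ℝ → ℝ) (α β γ : ℝ) (hαβ : α < β) (hβγ : β < γ)
    (hg : ContinuousOn g (Icc α γ))
    (hJ : Icc α γ ⊆ g '' Icc α β) (hK : Icc α γ ⊆ g '' Icc β γ)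
    (hβne : g β ≠ β) :
    ∃ x ∈ Icc α β, Function.minimalPeriod g x = 3 := by
  have hαγ : α ≤ γ := le_trans hαβ.le hβγ.le
  have hgJ : ContinuousOn g (Icc α β) := hg.mono (Icc_subset_Icc le_rfl hβγ.le)
  have hgK : ContinuousOn g (Icc β γ) := hg.mono (Icc_subset_Icc hαβ.le le_rfl)
  -- K₁ ⊆ K with g '' K₁ = J
  obtain ⟨k₁, k₂, hk1, hk12, hk2, hKimg⟩ := pullback g β γ α β hβγ.le hgK hαβ.le
    (fun x hx => hK ⟨hx.1, le_trans hx.2 hβγ.le⟩)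
  -- K₂ ⊆ K with g '' K₂ = K₁
  obtain ⟨l₁, l₂, hl1, hl12, hl2, hK2img⟩ := pullback g β γ k₁ k₂ hβγ.le hgK hk12
    (fun x hx => hK ⟨le_trans hαβ.le (le_trans hk1 hx.1), le_trans hx.2 hk2⟩)
  -- J₃ ⊆ J with g '' J₃ = K₂
  obtain ⟨m₁, m₂, hm1, hm12, hm2, hJimg⟩ := pullback g α β l₁ l₂ hαβ.le hgJ hl12
    (fun x hx => hJ ⟨le_trans hαβ.le (le_trans hl1 hx.1), le_trans hx.2 (le_trans hl2 le_rfl)⟩)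
  -- g^[3] '' [m₁,m₂] = [α, β]
  have himg3 : g^[3] '' Icc m₁ m₂ = Icc α β := by
    have : g^[3] = g ∘ g ∘ g := by
      rw [show (3:ℕ) = 2+1 from rfl, Function.iterate_succ', show (2:ℕ) = 1+1 from rfl,
        Function.iterate_succ', Function.iterate_one]
    rw [this, Set.image_comp, Set.image_comp, hJimg, hK2img, hKimg]
  -- fixed point of g^[3] in [m₁, m₂]
  have hm1J : Icc m₁ m₂ ⊆ Icc α β := Icc_subset_Icc hm1 hm2
  have hsub3 : Icc α β ⊆ g^[3] '' Icc m₁ m₂ := himg3.symm ▸ subset_rfl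
  obtain ⟨s, hs, hgs⟩ := hsub3 (left_mem_Icc.2 hαβ.le)
  obtain ⟨t, ht, hgt⟩ := hsub3 (right_mem_Icc.2 hαβ.le)
  have c1 : ContinuousOn g (Icc m₁ m₂) := hgJ.mono hm1J
  have maps1 : MapsTo g (Icc m₁ m₂) (Icc l₁ l₂) := fun x hx => by
    rw [← hJimg]; exact mem_image_of_mem g hx
  have c2 : ContinuousOn g (Icc l₁ l₂) := hgK.mono (Icc_subset_Icc hl1 hl2)
  have maps2 : MapsTo g (Icc l₁ l₂) (Icc k₁ k₂) := fun x hx => by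
    rw [← hK2img]; exact mem_image_of_mem g hx
  have c3 : ContinuousOn g (Icc k₁ k₂) := hgK.mono (Icc_subset_Icc hk1 hk2)
  have hit3 : g^[3] = g ∘ g ∘ g := by
    rw [show (3:ℕ) = 2+1 from rfl, Function.iterate_succ', show (2:ℕ) = 1+1 from rfl,
      Function.iterate_succ', Function.iterate_one]
  have hg3c : ContinuousOn (g^[3]) (Icc m₁ m₂) := by
    rw [hit3]
    exact c3.comp (c2.comp c1 maps1) (maps2.comp maps1)
  have hsuIcc : uIcc s t ⊆ Icc m₁ m₂ := uIcc_subset_Icc hs ht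
  have hcont : ContinuousOn (fun x => g^[3] x - x) (uIcc s t) :=
    (hg3c.mono hsuIcc).sub continuousOn_id
  have hmem0 : (0:ℝ) ∈ uIcc (g^[3] s - s) (g^[3] t - t) := by
    rw [hgs, hgt]
    have h1 : α - s ≤ 0 := by linarith [hs.1, hm1]
    have h2 : 0 ≤ β - t := by linarith [ht.2, hm2]
    rcases mem_uIcc (a := (0:ℝ)) (b := α - s) (c := β - t) with h
    exact h.mpr (Or.inl ⟨h1, h2⟩)
  obtain ⟨x, hxu, hgx⟩ := intermediate_value_uIcc hcont hmem0
  have hgx3 : g^[3] x = x := by linarith [sub_eq_zero.mp hgx]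
  have hxJ3 : x ∈ Icc m₁ m₂ := hsuIcc hxu
  have hxJ : x ∈ Icc α β := hm1J hxJ3
  have per : IsPeriodicPt g 3 x := hgx3
  have hdvd : Function.minimalPeriod g x ∣ 3 := per.minimalPeriod_dvd
  have hpos : 0 < Function.minimalPeriod g x := per.minimalPeriod_pos (by norm_num)
  rcases (Nat.prime_three.eq_one_or_self_of_dvd _ hdvd) with h1 | h3
  · exfalso
    have hfix : Function.IsFixedPt g x := Function.minimalPeriod_eq_one_iff_isFixedPt.mp h1
    have hgxK : g x ∈ Icc l₁ l₂ := maps1 hxJ3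
    have hxK : x ∈ Icc β γ := Icc_subset_Icc hl1 hl2 (hfix ▸ hgxK)
    have hxβ : x = β := le_antisymm hxJ.2 hxK.1
    exact hβne (by rw [← hxβ]; exact hfix)
  · exact ⟨x, hxJ, h3⟩


lemma convert_period (f : ℝ → ℝ) (x : ℝ) (N : ℕ) (hN : 1 ≤ N)
    (h3 : Function.minimalPeriod (f^[N]) x = 3) :
    1 ≤ Function.minimalPeriod f x ∧ ∀ j : ℕ, Function.minimalPeriod f x ≠ 2 ^ j := by
  have hper : IsPeriodicPt (f^[N]) 3 x := h3 ▸ isPeriodicPt_minimalPeriod (f^[N]) x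
  have hperf : IsPeriodicPt f (N * 3) x := by
    unfold IsPeriodicPt IsFixedPt at *
    rw [Function.iterate_mul]; exact hper
  have hpos : 0 < Function.minimalPeriod f x :=
    hperf.minimalPeriod_pos (by positivity)
  set m := Function.minimalPeriod f x with hm
  have hperm : IsPeriodicPt f m x := isPeriodicPt_minimalPeriod f x
  have hgm : IsPeriodicPt (f^[N]) m x := by
    unfold IsPeriodicPt IsFixedPt at *
    rw [← Function.iterate_mul, mul_comm, Function.iterate_mul]
    exact Function.iterate_fixed hperm N
  have hdvd : 3 ∣ m := h3 ▸ hgm.minimalPeriod_dvd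
  refine ⟨hpos, fun j hj => ?_⟩
  have : (3:ℕ) ∣ 2 ^ j := hj ▸ hdvd
  have h32 : (3:ℕ) ∣ 2 := Nat.prime_three.dvd_of_dvd_pow this
  norm_num at h32

lemma conj_iterate (c f : ℝ → ℝ) (hcc : ∀ x, c (c x) = x) (n : ℕ) (x : ℝ) :
    (c ∘ f ∘ c)^[n] x = c (f^[n] (c x)) := by
  induction n with
  | zero => simp [hcc]
  | succ n ih => rw [Function.iterate_succ_apply', ih, Function.iterate_succ_apply']
                 simp [hcc]

lemma conj_minimalPeriod (c f : ℝ → ℝ) (hcc : ∀ x, c (c x) = x) (x : ℝ) :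
    Function.minimalPeriod (c ∘ f ∘ c) (c x) = Function.minimalPeriod f x := by
  have key : ∀ n, IsPeriodicPt (c ∘ f ∘ c) n (c x) ↔ IsPeriodicPt f n x := by
    intro n
    unfold IsPeriodicPt IsFixedPt
    rw [conj_iterate c f hcc, hcc]
    constructor
    · intro h; have := congrArg c h; rwa [hcc, hcc] at this
    · intro h; rw [h]
  apply Nat.dvd_antisymm
  · exact ((key _).mpr (isPeriodicPt_minimalPeriod f x)).minimalPeriod_dvd
  · exact ((key _).mp (isPeriodicPt_minimalPeriod _ _)).minimalPeriod_dvd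


section
variable (A B : ℝ) (f : ℝ → ℝ)

/-- endpoint-IVT covering for iterates -/
lemma iter_cover (hf : ContinuousOn f (Icc A B)) (hmap : MapsTo f (Icc A B) (Icc A B))
    (n : ℕ) (u v : ℝ) (hu : u ∈ Icc A B) (hv : v ∈ Icc A B) (huv : u ≤ v) :
    uIcc (f^[n] u) (f^[n] v) ⊆ f^[n] '' Icc u v := by
  have hc : ContinuousOn (f^[n]) (uIcc u v) := by
    refine (hf.iterate hmap n).mono ?_
    rw [uIcc_of_le huv]
    exact Icc_subset_Icc hu.1 hv.2
  have := intermediate_value_uIcc hc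
  rwa [uIcc_of_le huv] at this

lemma caseA (hf : ContinuousOn f (Icc A B)) (hmap : MapsTo f (Icc A B) (Icc A B))
    (p z y : ℝ) (hp : p ∈ Icc A B) (hz : z ∈ Icc A B)
    (hfp : f p = p) (hfy : f y = p) (hpz : p < z) (hzy : z < y)
    (n : ℕ) (hn : 1 ≤ n) (hgz : f^[n] z = y) :
    ∃ N, 1 ≤ N ∧ ∃ x ∈ Icc A B, Function.minimalPeriod (f^[N]) x = 3 := by
  set g := f^[n] with hg
  have hgp : g p = p := Function.iterate_fixed hfp n
  have hgy : g y = p := by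
    obtain ⟨m, rfl⟩ : ∃ m, n = m + 1 := ⟨n - 1, (Nat.succ_pred_eq_of_pos hn).symm⟩
    rw [hg, Function.iterate_succ_apply, hfy, Function.iterate_fixed hfp]
  -- w with g w = z
  have hcov_pz : uIcc (g p) (g z) ⊆ g '' Icc p z := iter_cover A B f hf hmap n p z hp hz hpz.le
  have hzmem : z ∈ uIcc (g p) (g z) := by
    rw [hgp, hgz, uIcc_of_le (le_trans hpz.le hzy.le)]
    exact ⟨hpz.le, hzy.le⟩
  obtain ⟨w, hwmem, hgw⟩ := hcov_pz hzmem
  have hpw : p < w := by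
    rcases lt_or_eq_of_le hwmem.1 with h | h
    · exact h
    · exfalso; rw [← h, hgp] at hgw; exact absurd hgw (ne_of_lt hpz)
  have hwz : w < z := by
    rcases lt_or_eq_of_le hwmem.2 with h | h
    · exact h
    · exfalso; rw [h, hgz] at hgw; exact absurd hgw (ne_of_gt hzy)
  have hwI : w ∈ Icc A B := ⟨le_trans hp.1 hwmem.1, le_trans hwmem.2 hz.2⟩
  have hyI : y ∈ Icc A B := by
    have := Set.MapsTo.iterate hmap n hz
    rw [← hg] at this
    rwa [hgz] at this
  -- basic coverings
  have S1 : Icc p z ⊆ g '' Icc p w := by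
    have := iter_cover A B f hf hmap n p w hp hwI hpw.le
    rw [← hg] at this
    rw [hgp, hgw, uIcc_of_le hpz.le] at this; exact this
  have S2 : Icc p y ⊆ g '' Icc p z := by
    have := iter_cover A B f hf hmap n p z hp hz hpz.le
    rw [← hg] at this
    rw [hgp, hgz, uIcc_of_le (le_trans hpz.le hzy.le)] at this; exact this
  have S3 : Icc z y ⊆ g '' Icc w z := by
    have := iter_cover A B f hf hmap n w z hwI hz hwz.le
    rw [← hg] at this
    rw [hgw, hgz, uIcc_of_le hzy.le] at this; exact this
  have S4 : Icc p y ⊆ g '' Icc z y := by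
    have := iter_cover A B f hf hmap n z y hz hyI hzy.le
    rw [← hg] at this
    rw [hgz, hgy, uIcc_comm, uIcc_of_le (le_trans hpz.le hzy.le)] at this
    exact this
  -- iterate image identities
  have hit3 : g^[3] = g ∘ g ∘ g := by
    rw [show (3:ℕ) = 2+1 from rfl, Function.iterate_succ', show (2:ℕ) = 1+1 from rfl,
      Function.iterate_succ', Function.iterate_one]
  have himg3 : ∀ S : Set ℝ, g^[3] '' S = g '' (g '' (g '' S)) := by
    intro S; rw [hit3, Set.image_comp, Set.image_comp]
  have hpz_py : Icc p z ⊆ Icc p y := Icc_subset_Icc le_rfl hzy.le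
  have hpyinv : Icc p y ⊆ g '' Icc p y := fun x hx => image_mono (f := g) hpz_py (S2 hx)
  have hA1 : Icc p y ⊆ g '' (g '' Icc p w) := S2.trans (image_mono (f := g) S1)
  have hA2 : Icc p y ⊆ g '' (g '' (g '' Icc p w)) := hpyinv.trans (image_mono (f := g) hA1)
  have hJ : Icc p z ⊆ g^[3] '' Icc p w := by
    rw [himg3]; exact hpz_py.trans hA2
  have hB2 : Icc p y ⊆ g '' (g '' Icc w z) := S4.trans (image_mono (f := g) S3)
  have hB3 : Icc p y ⊆ g '' (g '' (g '' Icc w z)) := hpyinv.trans (image_mono (f := g) hB2)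
  have hK : Icc p z ⊆ g^[3] '' Icc w z := by
    rw [himg3]; exact hpz_py.trans hB3
  have hGw : g^[3] w = p := by
    rw [hit3]; simp only [Function.comp_apply]; rw [hgw, hgz, hgy]
  have heq : f^[n*3] = g^[3] := by rw [hg, Function.iterate_mul]
  have hcont : ContinuousOn (g^[3]) (Icc p z) := by
    rw [← heq]
    exact (hf.iterate hmap (n*3)).mono (Icc_subset_Icc hp.1 hz.2)
  obtain ⟨x, hx, h3⟩ := horseshoe_min3 (g^[3]) p w z hpw hwz hcont hJ hK
    (by rw [hGw]; exact ne_of_lt hpw)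
  refine ⟨n*3, by omega, x, ⟨le_trans hp.1 hx.1, le_trans hx.2 (le_trans hwz.le hz.2)⟩, ?_⟩
  rw [heq]; exact h3
end


section
variable (A B : ℝ) (f : ℝ → ℝ)

/-- Case 1 : some point of [p,y] maps at or above y. -/
lemma case1 (hf : ContinuousOn f (Icc A B)) (hmap : MapsTo f (Icc A B) (Icc A B))
    (p y t₀ : ℝ) (hp : p ∈ Icc A B) (hy : y ∈ Icc A B)
    (hfp : f p = p) (hfy : f y = p) (hpy : p < y)
    (ht₀ : t₀ ∈ Icc p y) (hft₀ : y ≤ f t₀) :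
    ∃ N, 1 ≤ N ∧ ∃ x ∈ Icc A B, Function.minimalPeriod (f^[N]) x = 3 := by
  have hsubI : Icc p y ⊆ Icc A B := Icc_subset_Icc hp.1 hy.2
  have ht₀I : t₀ ∈ Icc A B := hsubI ht₀
  have hcov : uIcc (f^[1] p) (f^[1] t₀) ⊆ f^[1] '' Icc p t₀ :=
    iter_cover A B f hf hmap 1 p t₀ hp ht₀I ht₀.1
  rw [Function.iterate_one] at hcov
  have hymem : y ∈ uIcc (f p) (f t₀) := by
    rw [hfp, uIcc_of_le (le_trans hpy.le hft₀)]
    exact ⟨hpy.le, hft₀⟩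
  obtain ⟨v, hv, hfv⟩ := hcov hymem
  have hpv : p < v := by
    rcases lt_or_eq_of_le hv.1 with h | h
    · exact h
    · exfalso; rw [← h, hfp] at hfv; exact absurd hfv (ne_of_lt hpy)
  have hvy : v < y := by
    rcases lt_or_eq_of_le (le_trans hv.2 ht₀.2) with h | h
    · exact h
    · exfalso; rw [h, hfy] at hfv; exact absurd hfv (ne_of_lt hpy)
  have hvI : v ∈ Icc A B := hsubI ⟨hpv.le, hvy.le⟩
  have hJ : Icc p y ⊆ f '' Icc p v := by
    have := iter_cover A B f hf hmap 1 p v hp hvI hpv.le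
    rw [Function.iterate_one, hfp, hfv, uIcc_of_le hpy.le] at this
    exact this
  have hK : Icc p y ⊆ f '' Icc v y := by
    have := iter_cover A B f hf hmap 1 v y hvI hy hvy.le
    rw [Function.iterate_one, hfv, hfy, uIcc_comm, uIcc_of_le hpy.le] at this
    exact this
  obtain ⟨x, hx, h3⟩ := horseshoe_min3 f p v y hpv hvy (hf.mono hsubI) hJ hK
    (by rw [hfv]; exact (ne_of_gt hvy))
  exact ⟨1, le_rfl, x, hsubI ⟨hx.1, le_trans hx.2 hvy.le⟩,
    by rw [Function.iterate_one]; exact h3⟩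

/-- Case B1 : witness z < p and some t₀ ∈ [p,y] with f t₀ < z. -/
lemma caseB1 (hf : ContinuousOn f (Icc A B)) (hmap : MapsTo f (Icc A B) (Icc A B))
    (p y z t₀ : ℝ) (hp : p ∈ Icc A B) (hy : y ∈ Icc A B) (hz : z ∈ Icc A B)
    (hfp : f p = p) (hfy : f y = p) (hpy : p < y) (hzp : z < p)
    (n : ℕ) (hn : 1 ≤ n) (hgz : f^[n] z = y)
    (ht₀ : t₀ ∈ Icc p y) (hft₀ : f t₀ < z) :
    ∃ N, 1 ≤ N ∧ ∃ x ∈ Icc A B, Function.minimalPeriod (f^[N]) x = 3 := by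
  set g := f^[n] with hg
  have hgp : g p = p := Function.iterate_fixed hfp n
  have hsubI : Icc p y ⊆ Icc A B := Icc_subset_Icc hp.1 hy.2
  have ht₀I : t₀ ∈ Icc A B := hsubI ht₀
  -- u ∈ (z,p) with g u = t₀
  have hcov : uIcc (g z) (g p) ⊆ g '' Icc z p := by
    have := iter_cover A B f hf hmap n z p hz hp hzp.le
    rw [← hg] at this; exact this
  have htmem : t₀ ∈ uIcc (g z) (g p) := by
    rw [hgz, hgp, uIcc_comm, uIcc_of_le hpy.le]
    exact ht₀
  obtain ⟨u, hu, hgu⟩ := hcov htmem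
  have hzu : z < u := by
    rcases lt_or_eq_of_le hu.1 with h | h
    · exact h
    · exfalso
      rw [← h, hgz] at hgu
      rw [← hgu, hfy] at hft₀
      linarith
  have hup : u < p := by
    rcases lt_or_eq_of_le hu.2 with h | h
    · exact h
    · exfalso
      rw [h, hgp] at hgu
      rw [← hgu, hfp] at hft₀
      linarith
  have huI : u ∈ Icc A B := ⟨le_trans hz.1 hu.1, le_trans hu.2 hp.2⟩
  -- F = f^[n+1]
  have hFz : f^[n+1] z = p := by rw [Function.iterate_succ_apply', ← hg, hgz, hfy]
  have hFu : f^[n+1] u = f t₀ := by rw [Function.iterate_succ_apply', ← hg, hgu]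
  have hFp : f^[n+1] p = p := Function.iterate_fixed hfp (n+1)
  have hJ : Icc z p ⊆ f^[n+1] '' Icc z u := by
    have := iter_cover A B f hf hmap (n+1) z u hz huI hzu.le
    rw [hFz, hFu, uIcc_comm, uIcc_of_le (le_of_lt (lt_trans hft₀ hzp))] at this
    exact fun x hx => this ⟨le_trans hft₀.le hx.1, hx.2⟩
  have hK : Icc z p ⊆ f^[n+1] '' Icc u p := by
    have := iter_cover A B f hf hmap (n+1) u p huI hp hup.le
    rw [hFu, hFp, uIcc_of_le (le_of_lt (lt_trans hft₀ hzp))] at this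
    exact fun x hx => this ⟨le_trans hft₀.le hx.1, hx.2⟩
  obtain ⟨x, hx, h3⟩ := horseshoe_min3 (f^[n+1]) z u p hzu hup
    ((hf.iterate hmap (n+1)).mono (Icc_subset_Icc hz.1 hp.2)) hJ hK
    (by rw [hFu]; exact ne_of_lt (lt_trans hft₀ hzu))
  exact ⟨n+1, by omega, x, ⟨le_trans hz.1 hx.1, le_trans hx.2 (le_trans hup.le hp.2)⟩, h3⟩

/-- Case Ha : ξ < p with f ξ = y and some t₀ ∈ [ξ,p] dipping at or below ξ. -/
lemma caseHa (hf : ContinuousOn f (Icc A B)) (hmap : MapsTo f (Icc A B) (Icc A B))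
    (p y ξ t₀ : ℝ) (hp : p ∈ Icc A B) (hy : y ∈ Icc A B) (hξ : ξ ∈ Icc A B)
    (hfp : f p = p) (hfy : f y = p) (hpy : p < y) (hξp : ξ < p) (hfξ : f ξ = y)
    (ht₀ : t₀ ∈ Icc ξ p) (hft₀ : f t₀ ≤ ξ) :
    ∃ N, 1 ≤ N ∧ ∃ x ∈ Icc A B, Function.minimalPeriod (f^[N]) x = 3 := by
  have hsubI : Icc ξ p ⊆ Icc A B := Icc_subset_Icc hξ.1 hp.2
  have ht₀I : t₀ ∈ Icc A B := hsubI ht₀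
  have hξt : ξ < t₀ := by
    rcases lt_or_eq_of_le ht₀.1 with h | h
    · exact h
    · exfalso; rw [← h, hfξ] at hft₀; linarith
  have htp : t₀ < p := by
    rcases lt_or_eq_of_le ht₀.2 with h | h
    · exact h
    · exfalso; rw [h, hfp] at hft₀; linarith
  have hJ : Icc ξ p ⊆ f '' Icc ξ t₀ := by
    have := iter_cover A B f hf hmap 1 ξ t₀ hξ ht₀I hξt.le
    rw [Function.iterate_one, hfξ, uIcc_comm,
      uIcc_of_le (show f t₀ ≤ y by linarith)] at this
    exact fun x hx => this ⟨le_trans hft₀ hx.1, le_trans hx.2 (by linarith)⟩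
  have hK : Icc ξ p ⊆ f '' Icc t₀ p := by
    have := iter_cover A B f hf hmap 1 t₀ p ht₀I hp htp.le
    rw [Function.iterate_one, hfp,
      uIcc_of_le (show f t₀ ≤ p by linarith)] at this
    exact fun x hx => this ⟨le_trans hft₀ hx.1, hx.2⟩
  obtain ⟨x, hx, h3⟩ := horseshoe_min3 f ξ t₀ p hξt htp (hf.mono hsubI) hJ hK
    (by intro h; rw [h] at hft₀; linarith)
  exact ⟨1, le_rfl, x, hsubI ⟨hx.1, le_trans hx.2 htp.le⟩,
    by rw [Function.iterate_one]; exact h3⟩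
end


section
variable (A B : ℝ) (f : ℝ → ℝ) (p y : ℝ)

/-- if f maps [p,y] into [p,y), orbits that enter stay in [p,y). -/
lemma orbit_trapped (hmaps : ∀ t ∈ Icc p y, f t ∈ Ico p y) :
    ∀ m, 1 ≤ m → ∀ t ∈ Icc p y, f^[m] t ∈ Ico p y := by
  intro m hm
  induction m, hm using Nat.le_induction with
  | base => intro t ht; rw [Function.iterate_one]; exact hmaps t ht
  | succ m hm ih =>
    intro t ht
    rw [Function.iterate_succ_apply]
    exact ih (f t) (Ico_subset_Icc_self (hmaps t ht))

/-- trapped case: an orbit from the left of p reaching y gives a direct left preimage of y. -/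
lemma left_preimage (hf : ContinuousOn f (Icc A B)) (hmap : MapsTo f (Icc A B) (Icc A B))
    (hp : p ∈ Icc A B) (hfp : f p = p) (hpy : p < y)
    (hmaps : ∀ t ∈ Icc p y, f t ∈ Ico p y) :
    ∀ n, 1 ≤ n → ∀ z ∈ Icc A B, z < p → f^[n] z = y →
      ∃ η ∈ Icc A B, η < p ∧ f η = y := by
  intro n hn
  induction n, hn using Nat.le_induction with
  | base =>
    intro z hz hzp hzy
    rw [Function.iterate_one] at hzy
    exact ⟨z, hz, hzp, hzy⟩
  | succ n hn ih =>
    intro z hz hzp hzy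
    rw [Function.iterate_succ_apply] at hzy
    have hz1 : f z ∈ Icc A B := hmap hz
    rcases lt_trichotomy (f z) p with h | h | h
    · exact ih (f z) hz1 h hzy
    · exfalso
      have := orbit_trapped f p y hmaps n hn (f z) (by rw [h]; exact ⟨le_rfl, hpy.le⟩)
      rw [hzy] at this; exact (lt_irrefl y this.2)
    · rcases le_or_gt (f z) y with h2 | h2
      · exfalso
        have := orbit_trapped f p y hmaps n hn (f z) ⟨h.le, h2⟩
        rw [hzy] at this; exact (lt_irrefl y this.2)
      · -- f z > y : IVT on [z,p]
        have hcov : uIcc (f z) (f p) ⊆ f '' Icc z p := by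
          have := intermediate_value_uIcc
            ((hf.mono (by rw [uIcc_of_le hzp.le]; exact Icc_subset_Icc hz.1 hp.2)) :
              ContinuousOn f (uIcc z p))
          rwa [uIcc_of_le hzp.le] at this
        have hymem : y ∈ uIcc (f z) (f p) := by
          rw [hfp, uIcc_comm, uIcc_of_le (by linarith : p ≤ f z)]
          exact ⟨hpy.le, h2.le⟩
        obtain ⟨η, hη, hfη⟩ := hcov hymem
        have hηp : η < p := by
          rcases lt_or_eq_of_le hη.2 with hh | hh
          · exact hh
          · exfalso; rw [hh, hfp] at hfη; exact absurd hfη (ne_of_lt hpy)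
        exact ⟨η, ⟨le_trans hz.1 hη.1, le_trans hη.2 hp.2⟩, hηp, hfη⟩

/-- final contradiction : with no dip below ξ and trapped right side, points in (ξ,y] never reach y. -/
lemma no_escape (hf : ContinuousOn f (Icc A B)) (hmap : MapsTo f (Icc A B) (Icc A B))
    (hp : p ∈ Icc A B) (hfp : f p = p) (hpy : p < y) (ξ : ℝ) (hξp : ξ < p)
    (hmaps : ∀ t ∈ Icc p y, f t ∈ Ico p y)
    (hnodip : ∀ t ∈ Icc ξ p, ξ < f t)
    (hmaxpre : ∀ w ∈ Icc A B, w < p → f w = y → w ≤ ξ) :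
    ∀ m, 1 ≤ m → ∀ t ∈ Icc A B, ξ < t → t ≤ y → f^[m] t ≠ y := by
  intro m hm
  induction m, hm using Nat.le_induction with
  | base =>
    intro t ht hξt hty hfty
    rw [Function.iterate_one] at hfty
    rcases lt_or_ge t p with h | h
    · exact absurd (hmaxpre t ht h hfty) (not_le.mpr hξt)
    · have := hmaps t ⟨h, hty⟩
      rw [hfty] at this; exact lt_irrefl y this.2
  | succ m hm ih =>
    intro t ht hξt hty hfty
    rw [Function.iterate_succ_apply] at hfty
    have ht1 : f t ∈ Icc A B := hmap ht
    rcases lt_or_ge t p with h | h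
    · -- t ∈ (ξ, p)
      have hft : ξ < f t := hnodip t ⟨hξt.le, h.le⟩
      rcases le_or_gt (f t) y with h2 | h2
      · exact ih (f t) ht1 hft h2 hfty
      · -- f t > y : IVT gives left preimage of y above ξ, contradiction
        have hcov : uIcc (f t) (f p) ⊆ f '' Icc t p := by
          have := intermediate_value_uIcc
            ((hf.mono (by rw [uIcc_of_le h.le]; exact Icc_subset_Icc ht.1 hp.2)) :
              ContinuousOn f (uIcc t p))
          rwa [uIcc_of_le h.le] at this
        have hymem : y ∈ uIcc (f t) (f p) := by
          rw [hfp, uIcc_comm, uIcc_of_le (by linarith : p ≤ f t)]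
          exact ⟨hpy.le, h2.le⟩
        obtain ⟨η, hη, hfη⟩ := hcov hymem
        have hηp : η < p := by
          rcases lt_or_eq_of_le hη.2 with hh | hh
          · exact hh
          · exfalso; rw [hh, hfp] at hfη; exact absurd hfη (ne_of_lt hpy)
        have : η ≤ ξ := hmaxpre η ⟨le_trans ht.1 hη.1, le_trans hη.2 hp.2⟩ hηp hfη
        linarith [hη.1]
    · -- t ∈ [p, y]
      have := hmaps t ⟨h, hty⟩
      exact ih (f t) ht1 (by linarith [this.1]) (le_of_lt this.2) hfty
end


/-- Core lemma: a right homoclinic point gives a point of minimal period 3 for some iterate. -/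
lemma core (A B : ℝ) (f : ℝ → ℝ) (hf : ContinuousOn f (Icc A B))
    (hmap : MapsTo f (Icc A B) (Icc A B))
    (p y : ℝ) (hp : p ∈ Icc A B) (hy : y ∈ Icc A B)
    (hfp : f p = p) (hfy : f y = p) (hpy : p < y)
    (hW : ∀ ε, 0 < ε → ∃ n, 1 ≤ n ∧ ∃ z ∈ Icc A B, |z - p| < ε ∧ f^[n] z = y) :
    ∃ N, 1 ≤ N ∧ ∃ x ∈ Icc A B, Function.minimalPeriod (f^[N]) x = 3 := by
  have hnep : ∀ n z, f^[n] z = y → z ≠ p := by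
    intro n z hzy h
    subst h
    rw [Function.iterate_fixed hfp] at hzy
    exact absurd hzy (ne_of_lt hpy)
  by_cases hc1 : ∃ t ∈ Icc p y, y ≤ f t
  · obtain ⟨t₀, ht₀, hft₀⟩ := hc1
    exact case1 A B f hf hmap p y t₀ hp hy hfp hfy hpy ht₀ hft₀
  push_neg at hc1
  by_cases hdip : ∃ t ∈ Icc p y, f t < p
  · obtain ⟨t₀, ht₀, hft₀⟩ := hdip
    obtain ⟨n, hn, z, hz, hzd, hzy⟩ := hW (min (y - p) (p - f t₀))
      (lt_min (by linarith) (by linarith))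
    rcases lt_or_gt_of_ne (hnep n z hzy) with h | h
    · refine caseB1 A B f hf hmap p y z t₀ hp hy hz hfp hfy hpy h n hn hzy ht₀ ?_
      have := (abs_lt.mp (lt_of_lt_of_le hzd (min_le_right _ _))).1
      linarith
    · have hzy' : z < y := by
        have := (abs_lt.mp (lt_of_lt_of_le hzd (min_le_left _ _))).2
        linarith
      exact caseA A B f hf hmap p z y hp hz hfp hfy h hzy' n hn hzy
  · push_neg at hdip
    have hmaps : ∀ t ∈ Icc p y, f t ∈ Ico p y := fun t ht => ⟨hdip t ht, hc1 t ht⟩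
    obtain ⟨n₀, hn₀, z₀, hz₀, hzd₀, hzy₀⟩ := hW (y - p) (by linarith)
    rcases lt_or_gt_of_ne (hnep n₀ z₀ hzy₀) with h₀ | h₀
    · obtain ⟨η, hηI, hηp, hfη⟩ :=
        left_preimage A B f p y hf hmap hp hfp hpy hmaps n₀ hn₀ z₀ hz₀ h₀ hzy₀
      set P := (Icc A B ∩ f ⁻¹' {y}) ∩ Iic p with hP
      have hPclosed : IsClosed P :=
        (hf.preimage_isClosed_of_isClosed isClosed_Icc isClosed_singleton).inter isClosed_Iic
      have hPne : P.Nonempty := ⟨η, ⟨hηI, by simp [hfη]⟩, hηp.le⟩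
      have hPbdd : BddAbove P := ⟨p, fun w hw => hw.2⟩
      set ξ := sSup P with hξdef
      have hξP : ξ ∈ P := hPclosed.csSup_mem hPne hPbdd
      have hfξ : f ξ = y := hξP.1.2
      have hξI : ξ ∈ Icc A B := hξP.1.1
      have hξp : ξ < p := lt_of_le_of_ne hξP.2
        (fun h => by rw [h, hfp] at hfξ; exact absurd hfξ (ne_of_lt hpy))
      have hmaxpre : ∀ w ∈ Icc A B, w < p → f w = y → w ≤ ξ := fun w hw hwp hfw =>
        le_csSup hPbdd ⟨⟨hw, by simp [hfw]⟩, hwp.le⟩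
      by_cases hdip2 : ∃ t ∈ Icc ξ p, f t ≤ ξ
      · obtain ⟨t₀, ht₀, hft₀⟩ := hdip2
        exact caseHa A B f hf hmap p y ξ t₀ hp hy hξI hfp hfy hpy hξp hfξ ht₀ hft₀
      · push_neg at hdip2
        obtain ⟨n, hn, z, hz, hzd, hzy⟩ := hW (min (y - p) (p - ξ))
          (lt_min (by linarith) (by linarith))
        rcases lt_or_gt_of_ne (hnep n z hzy) with h | h
        · exfalso
          have hξz : ξ < z := by
            have := (abs_lt.mp (lt_of_lt_of_le hzd (min_le_right _ _))).1
            linarith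
          exact no_escape A B f p y hf hmap hp hfp hpy ξ hξp hmaps hdip2 hmaxpre
            n hn z hz hξz (by linarith) hzy
        · have hzy' : z < y := by
            have := (abs_lt.mp (lt_of_lt_of_le hzd (min_le_left _ _))).2
            linarith
          exact caseA A B f hf hmap p z y hp hz hfp hfy h hzy' n hn hzy
    · have hzy' : z₀ < y := by
        have := (abs_lt.mp hzd₀).2
        linarith
      exact caseA A B f hf hmap p z₀ y hp hz₀ hfp hfy h₀ hzy' n₀ hn₀ hzy₀


/-- A homoclinic point yields a periodic point whose least period is not a power of two,
so the set of periods of `f` is not contained in `{2^n : n ∈ ℕ}`. -/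
theorem period_not_pow_two_of_homoclinic
    (A B : ℝ) (f : ℝ → ℝ)
    (hf : ContinuousOn f (Set.Icc A B))
    (hmap : Set.MapsTo f (Set.Icc A B) (Set.Icc A B))
    (p : ℝ) (hpI : p ∈ Set.Icc A B) (hfp : f p = p)
    (a b : ℝ) (hab : a < b) (hpab : p ∈ Set.Icc a b)
    (habu : Set.Icc a b ⊆ unstableManifold f (Set.Icc A B) p)
    (y : ℝ) (hy : y ∈ Set.Ioo a b) (hyp : y ≠ p)
    (k : ℕ) (hk : 1 ≤ k) (hky : f^[k] y = p) :
    ∃ x ∈ Set.Icc A B, 1 ≤ Function.minimalPeriod f x ∧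
      ∀ j : ℕ, Function.minimalPeriod f x ≠ 2 ^ j := by
  have hyu : y ∈ unstableManifold f (Set.Icc A B) p := habu ⟨hy.1.le, hy.2.le⟩
  have hyI : y ∈ Set.Icc A B := hyu.1
  have hyV := hyu.2
  -- reduce to a point y' with f y' = p
  have hex : ∃ i, f^[i + 1] y = p := ⟨k - 1, by rwa [Nat.sub_add_cancel hk]⟩
  set j := Nat.find hex with hj
  set y' := f^[j] y with hy'
  have hfy' : f y' = p := by
    rw [hy', ← Function.iterate_succ_apply' f j y]
    exact Nat.find_spec hex
  have hy'ne : y' ≠ p := by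
    rcases Nat.eq_zero_or_pos j with h0 | hpos
    · rw [hy', h0]; simpa using hyp
    · intro hcontra
      obtain ⟨m, hm⟩ : ∃ m, j = m + 1 := ⟨j - 1, (Nat.succ_pred_eq_of_pos hpos).symm⟩
      have : f^[m + 1] y = p := by rw [← hm]; exact hy' ▸ hcontra
      exact Nat.find_min hex (by omega : m < j) this
  have hy'I : y' ∈ Set.Icc A B := hmap.iterate j hyI
  have hW' : ∀ ε, 0 < ε → ∃ n, 1 ≤ n ∧ ∃ z ∈ Set.Icc A B, |z - p| < ε ∧ f^[n] z = y' := by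
    intro ε hε
    obtain ⟨n, hn, hmem⟩ := hyV (Set.Ioo (p - ε) (p + ε)) isOpen_Ioo
      ⟨by linarith, by linarith⟩
    obtain ⟨z, ⟨hzV, hzI⟩, hzy⟩ := hmem
    refine ⟨j + n, by omega, z, hzI, ?_, ?_⟩
    · rw [abs_lt]; constructor <;> [linarith [hzV.1]; linarith [hzV.2]]
    · rw [Function.iterate_add_apply, hzy, hy']
  rcases lt_or_gt_of_ne hy'ne with hlt | hgt
  · -- y' < p : conjugate by the reflection c
    set c : ℝ → ℝ := fun x => A + B - x with hcdef
    have hcc : ∀ x, c (c x) = x := by intro x; simp [hcdef]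
    have hccont : Continuous c := by
      rw [hcdef]; exact continuous_const.sub continuous_id
    have hmemc : ∀ x, x ∈ Set.Icc A B → c x ∈ Set.Icc A B := by
      intro x hx
      simp only [hcdef, Set.mem_Icc] at *
      constructor <;> linarith [hx.1, hx.2]
    set F := c ∘ f ∘ c with hF
    have hFcont : ContinuousOn F (Set.Icc A B) := by
      apply Continuous.comp_continuousOn hccont
      exact hf.comp hccont.continuousOn hmemc
    have hmapF : Set.MapsTo F (Set.Icc A B) (Set.Icc A B) := by
      intro x hx
      exact hmemc _ (hmap (hmemc _ hx))
    have hFp : F (c p) = c p := by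
      show c (f (c (c p))) = c p
      rw [hcc, hfp]
    have hFy : F (c y') = c p := by
      show c (f (c (c y'))) = c p
      rw [hcc, hfy']
    have hlt' : c p < c y' := by simp only [hcdef]; linarith
    have hWF : ∀ ε, 0 < ε → ∃ n, 1 ≤ n ∧ ∃ z ∈ Set.Icc A B, |z - c p| < ε ∧ F^[n] z = c y' := by
      intro ε hε
      obtain ⟨n, hn, z, hzI, hzd, hzy⟩ := hW' ε hε
      refine ⟨n, hn, c z, hmemc _ hzI, ?_, ?_⟩
      · have : c z - c p = p - z := by simp only [hcdef]; ring
        rw [this, abs_sub_comm]; exact hzd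
      · rw [hF, conj_iterate c f hcc n (c z), hcc, hzy]
    obtain ⟨N, hN, x, hxI, h3⟩ := core A B F hFcont hmapF (c p) (c y')
      (hmemc _ hpI) (hmemc _ hy'I) hFp hFy hlt' hWF
    have he : F^[N] = c ∘ f^[N] ∘ c := by
      funext t; rw [hF, conj_iterate c f hcc N t]; rfl
    rw [he] at h3
    have htrans := conj_minimalPeriod c (f^[N]) hcc (c x)
    rw [hcc] at htrans
    have h3' : Function.minimalPeriod (f^[N]) (c x) = 3 := by rw [← htrans, h3]
    obtain ⟨h1, h2⟩ := convert_period f (c x) N hN h3'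
    exact ⟨c x, hmemc _ hxI, h1, h2⟩
  · obtain ⟨N, hN, x, hxI, h3⟩ := core A B f hf hmap p y' hpI hy'I hfp hfy' hgt hW'
    obtain ⟨h1, h2⟩ := convert_period f x N hN h3
    exact ⟨x, hxI, h1, h2⟩
end
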